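/- arXiv:2302.08581 — 2 statements merged into one kernel-verified Lean document; each statement's English description precedes it below -/
import Mathlib

section
/- The collection D_λ^0 of subsets X ⊆ λ⁺ × λ⁺ such that for some club E ⊆ λ⁺ and some regressive function g : S_λ^{λ⁺} → λ⁺ the set {(α,β) : α < β < λ⁺, α,β ∈ S_λ^{λ⁺} ∩ E, g(α) = g(β)} is contained in X, is a λ-complete filter on λ⁺ × λ⁺ (it does not contain the empty set and is closed under supersets and intersections of fewer than λ members). -/
open Cardinal Set

namespace Stmt0

/-- λ⁺ as an ordinal. -/
noncomputable def lamPlus (lam : Cardinal) : Ordinal := (Order.succ lam).ord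

/-- S_λ^{λ⁺} : the ordinals below λ⁺ of cofinality λ. -/
def Sstat (lam : Cardinal) : Set Ordinal :=
  {δ | δ < lamPlus lam ∧ δ.cof = lam}

/-- E is a club of λ⁺ : a closed unbounded subset of λ⁺. -/
def IsClub (lam : Cardinal) (E : Set Ordinal) : Prop :=
  (∀ a ∈ E, a < lamPlus lam) ∧
  (∀ a < lamPlus lam, ∃ b ∈ E, a ≤ b) ∧
  (∀ a < lamPlus lam, a ≠ 0 → (∀ b < a, ∃ c ∈ E, b ≤ c ∧ c < a) → a ∈ E)

/-- g is regressive on S_λ^{λ⁺}. -/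
def IsRegressive (lam : Cardinal) (g : Ordinal → Ordinal) : Prop :=
  ∀ δ ∈ Sstat lam, g δ < δ

/-- The generating set {(α,β) : α < β < λ⁺, α,β ∈ S_λ^{λ⁺} ∩ E, g(α) = g(β)}. -/
def gen (lam : Cardinal) (E : Set Ordinal) (g : Ordinal → Ordinal) :
    Set (Ordinal × Ordinal) :=
  {p | p.1 < p.2 ∧ p.2 < lamPlus lam ∧ p.1 ∈ Sstat lam ∩ E ∧ p.2 ∈ Sstat lam ∩ E ∧
    g p.1 = g p.2}

/-- The collection D_λ^0. -/
def Dlam (lam : Cardinal) : Set (Set (Ordinal × Ordinal)) :=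
  {X | X ⊆ Set.Iio (lamPlus lam) ×ˢ Set.Iio (lamPlus lam) ∧
    ∃ E g, IsClub lam E ∧ IsRegressive lam g ∧ gen lam E g ⊆ X}

/-! ### Helper lemmas -/

open Ordinal

section Helpers

variable {lam : Cardinal.{0}}

lemma lt_lamPlus_iff {o : Ordinal} : o < lamPlus lam ↔ o.card ≤ lam := by
  rw [lamPlus, Cardinal.lt_ord, Order.lt_succ_iff]

lemma lamord_lt_P : lam.ord < lamPlus lam := by
  rw [lt_lamPlus_iff, card_ord]

lemma P_pos : (0 : Ordinal) < lamPlus lam :=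
  lt_of_le_of_lt zero_le lamord_lt_P

/-- additive indecomposability of `c.ord` for infinite `c`. -/
lemma add_lt_ord {c : Cardinal} (hc : ℵ₀ ≤ c) {a b : Ordinal}
    (ha : a < c.ord) (hb : b < c.ord) : a + b < c.ord := by
  rw [Cardinal.lt_ord] at *
  rw [Ordinal.card_add]
  exact Cardinal.add_lt_of_lt hc ha hb

lemma add_lt_P (hreg : lam.IsRegular) {a b : Ordinal}
    (ha : a < lamPlus lam) (hb : b < lamPlus lam) : a + b < lamPlus lam :=
  add_lt_ord (hreg.aleph0_le.trans (Order.le_succ lam)) ha hb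

lemma one_lt_P (hreg : lam.IsRegular) : (1 : Ordinal) < lamPlus lam := by
  rw [lt_lamPlus_iff]
  simpa using (Cardinal.one_lt_aleph0.trans_le hreg.aleph0_le).le

lemma succ_lt_P (hreg : lam.IsRegular) {a : Ordinal} (ha : a < lamPlus lam) :
    a + 1 < lamPlus lam :=
  add_lt_P hreg ha (one_lt_P hreg)

lemma P_isRegular (hreg : lam.IsRegular) : (Order.succ lam).IsRegular :=
  Cardinal.isRegular_succ hreg.aleph0_le

/-- spacing : ordinals of cofinality `lam` are at distance `≥ lam.ord` above anything below. -/
lemma add_lam_le (hreg : lam.IsRegular) {μ x : Ordinal} (hco : μ.cof = lam) (hx : x < μ) :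
    x + lam.ord ≤ μ := by
  by_contra hcon
  push_neg at hcon
  have hs : x + (μ - x) = μ := Ordinal.add_sub_cancel_of_le hx.le
  have hslt : μ - x < lam.ord := by
    rw [← add_lt_add_iff_left x, hs]; exact hcon
  have hsne : μ - x ≠ 0 := by
    intro h0
    rw [h0, add_zero] at hs
    exact absurd hs hx.ne
  have h1 : μ.cof = (μ - x).cof := by
    conv_lhs => rw [← hs]
    exact Ordinal.cof_add _ hsne
  have h2 : (μ - x).cof ≤ (μ - x).card := Ordinal.cof_le_card _
  have h3 : (μ - x).card < lam := Cardinal.lt_ord.1 hslt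
  rw [hco] at h1
  exact absurd (h1 ▸ h2) (not_le_of_gt h3)

lemma S_lamord_le (hreg : lam.IsRegular) {μ : Ordinal} (hco : μ.cof = lam) : lam.ord ≤ μ := by
  have := Ordinal.ord_cof_le μ
  rwa [hco] at this

lemma S_isLimit (hreg : lam.IsRegular) {μ : Ordinal} (hco : μ.cof = lam) : Order.IsSuccLimit μ :=
  Ordinal.aleph0_le_cof.1 (by rw [hco]; exact hreg.aleph0_le)


/-- Key lemma: above any `b < lamPlus lam` there is an ordinal of cofinality `lam`
closed under an arbitrary `P`-bounded function `F`. -/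
lemma exists_closure_point (hreg : lam.IsRegular) (F : Ordinal → Ordinal)
    (hbdd : ∀ x < lamPlus lam, F x < lamPlus lam) {b : Ordinal} (hb : b < lamPlus lam) :
    ∃ δ, δ < lamPlus lam ∧ δ.cof = lam ∧ b < δ ∧ ∀ β < δ, F β < δ := by
  classical
  -- a monotone majorant of F
  set Fb : Ordinal → Ordinal := fun x =>
    (x + lam.ord + 1) ⊔ (⨆ s : Shrink.{0} ↥(Iio (x+1)),
      F (((equivShrink ↥(Iio (x+1))).symm s).val)) with hFbdef
  have hFb_ge : ∀ β x, β < x + 1 → F β ≤ Fb x := by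
    intro β x h
    refine le_sup_of_le_right ?_
    have he : F β = F (((equivShrink ↥(Iio (x+1))).symm (equivShrink _ ⟨β, h⟩)).val) := by simp
    rw [he]
    exact Ordinal.le_iSup _ _
  have hFb_gt : ∀ x, x < Fb x := fun x =>
    lt_of_lt_of_le (lt_of_le_of_lt (le_self_add (a := x) (b := lam.ord)) (lt_add_one _)) le_sup_left
  have hFb_mono : Monotone Fb := by
    intro x y hxy
    refine sup_le_sup (add_le_add_left (add_le_add_left hxy _) _) ?_
    refine Ordinal.iSup_le fun s => ?_
    have h2 : (((equivShrink ↥(Iio (x+1))).symm s).val) < y + 1 :=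
      lt_of_lt_of_le ((equivShrink ↥(Iio (x+1))).symm s).2 (add_le_add_left hxy 1)
    have he : F (((equivShrink ↥(Iio (x+1))).symm s).val)
        = F (((equivShrink ↥(Iio (y+1))).symm (equivShrink _
            ⟨((equivShrink ↥(Iio (x+1))).symm s).val, h2⟩)).val) := by simp
    rw [he]
    exact Ordinal.le_iSup _ _
  have hFb_bdd : ∀ x < lamPlus lam, Fb x < lamPlus lam := by
    intro x hx
    refine max_lt (add_lt_P hreg (add_lt_P hreg hx lamord_lt_P) (one_lt_P hreg)) ?_
    have hcard : #(Shrink.{0} ↥(Iio (x+1))) < Order.succ lam := by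
      have h1 : Cardinal.lift.{1} #(Shrink.{0} ↥(Iio (x+1))) = #(↥(Iio (x+1))) := by
        simpa using Cardinal.lift_mk_shrink'' ↥(Iio (x+1))
      rw [Ordinal.mk_Iio_ordinal] at h1
      have h2 : #(Shrink.{0} ↥(Iio (x+1))) = (x+1).card := Cardinal.lift_injective h1
      rw [h2, Order.lt_succ_iff, ← lt_lamPlus_iff]
      exact succ_lt_P hreg hx
    refine Cardinal.iSup_lt_ord_of_isRegular (P_isRegular hreg) hcard fun s => ?_
    exact hbdd _ (lt_of_lt_of_le ((equivShrink ↥(Iio (x+1))).symm s).2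
      (succ_lt_P hreg hx).le)
  -- countable closure
  set cl : Ordinal → Ordinal := fun a => ⨆ n : ℕ, Fb^[n] a with hcldef
  have hit_lt : ∀ (a : Ordinal) (n : ℕ), Fb^[n] a < Fb^[n+1] a := by
    intro a n
    rw [Function.iterate_succ_apply']
    exact hFb_gt _
  have hcl_le : ∀ a, a ≤ cl a := fun a => Ordinal.le_iSup (fun n : ℕ => Fb^[n] a) 0
  have hcl_closed : ∀ a, ∀ β < cl a, Fb β < cl a := by
    intro a β hβ
    obtain ⟨n, hn⟩ := Ordinal.lt_iSup_iff.1 hβ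
    have h1 : Fb β ≤ Fb^[n+1] a := by
      rw [Function.iterate_succ_apply']
      exact hFb_mono hn.le
    exact lt_of_le_of_lt h1 (lt_of_lt_of_le (hit_lt a (n+1)) (Ordinal.le_iSup _ (n+2)))
  have hcl_lt : ∀ a < lamPlus lam, cl a < lamPlus lam := by
    intro a ha
    refine Cardinal.iSup_lt_ord_of_isRegular (P_isRegular hreg)
      (by rw [Cardinal.mk_nat]; exact hreg.aleph0_le.trans_lt (Order.lt_succ _)) ?_
    intro n
    induction n with
    | zero => simpa [lamPlus] using ha
    | succ n ih => rw [Function.iterate_succ_apply']; exact hFb_bdd _ ih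
  -- the closure-point club
  set C : Set Ordinal := {x | (∀ β < x, Fb β < x) ∧ b + 1 ≤ x} with hCdef
  have hcl_mem : ∀ a, b + 1 ≤ a → cl a ∈ C :=
    fun a ha => ⟨hcl_closed a, ha.trans (hcl_le a)⟩
  have hCub : ¬ BddAbove C := by
    rw [not_bddAbove_iff]
    intro y
    refine ⟨cl ((y ⊔ b) + 1), hcl_mem _ (add_le_add_left le_sup_right 1), ?_⟩
    exact lt_of_lt_of_le (lt_of_le_of_lt le_sup_left (lt_add_one (y ⊔ b))) (hcl_le _)
  have hCclosed : IsClosed C := by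
    rw [Ordinal.isClosed_iff_iSup]
    intro ι hι f hf
    constructor
    · intro β hβ
      obtain ⟨i, hi⟩ := Ordinal.lt_iSup_iff.1 hβ
      exact lt_of_lt_of_le ((hf i).1 β hi) (Ordinal.le_iSup f i)
    · obtain ⟨i⟩ := hι
      exact (hf i).2.trans (Ordinal.le_iSup f i)
  set H : Ordinal → Ordinal := Ordinal.enumOrd C with hHdef
  have hHnormal : Order.IsNormal H := (Ordinal.enumOrd_isNormal_iff_isClosed hCub).2 hCclosed
  have hHlt : ∀ ξ, ξ ≤ lam.ord → H ξ < lamPlus lam := by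
    intro ξ
    induction ξ using Ordinal.induction with
    | h ξ ih =>
      intro hξ
      set x : Ordinal := cl ((Ordinal.bsup ξ (fun η _ => H η) ⊔ b) + 1) with hxdef
      have hxC : x ∈ C := hcl_mem _ (add_le_add_left le_sup_right 1)
      have hxgt : ∀ η < ξ, H η < x := by
        intro η hη
        have h1 : H η ≤ Ordinal.bsup ξ (fun η _ => H η) ⊔ b :=
          le_trans (Ordinal.le_bsup (fun η _ => H η) η hη) le_sup_left
        exact lt_of_le_of_lt h1 (lt_of_lt_of_le (lt_add_one _) (hcl_le _))
      have hxP : x < lamPlus lam := by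
        refine hcl_lt _ (succ_lt_P hreg (max_lt ?_ hb))
        refine Cardinal.bsup_lt_ord_of_isRegular (P_isRegular hreg) ?_ fun η hη => ?_
        · exact lt_of_le_of_lt (by simpa [card_ord] using Ordinal.card_le_card hξ)
            (Order.lt_succ lam)
        · exact ih η hη (hη.le.trans hξ)
      exact lt_of_le_of_lt (Ordinal.enumOrd_le_of_forall_lt hxC hxgt) hxP
  refine ⟨H lam.ord, hHlt _ le_rfl, ?_, ?_, ?_⟩
  · rw [cof_map_of_isNormal hHnormal (Cardinal.isSuccLimit_ord hreg.aleph0_le), hreg.cof_eq]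
  · have := (Ordinal.enumOrd_mem hCub lam.ord).2
    exact lt_of_lt_of_le (lt_add_one b) this
  · intro β hβ
    have hC := (Ordinal.enumOrd_mem hCub lam.ord).1
    exact lt_of_le_of_lt (hFb_ge β β (lt_add_one β)) (hC β hβ)


/-! ### Clubs contain tails -/

lemma club_tail {E : Set Ordinal} (hE : IsClub lam E) {b : Ordinal} (hbE : b ∈ E) :
    ∀ a, b < a → a < lamPlus lam → a ∈ E := by
  intro a
  induction a using Ordinal.induction with
  | h a ih =>
    intro hba haP
    refine hE.2.2 a haP (lt_of_le_of_lt (zero_le (a := b)) hba).ne' ?_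
    intro x hx
    rcases le_or_gt x b with h | h
    · exact ⟨b, hbE, h, hba⟩
    · exact ⟨x, ih x hx h (hx.trans haP), le_rfl, hx⟩

lemma tail_isClub (hreg : lam.IsRegular) {γ : Ordinal} (hγ : γ < lamPlus lam) :
    IsClub lam {x | γ < x ∧ x < lamPlus lam} := by
  refine ⟨fun a ha => ha.2, fun a ha => ?_, fun a haP ha0 hcond => ?_⟩
  · exact ⟨a ⊔ (γ+1), ⟨lt_of_lt_of_le (lt_add_one γ) le_sup_right,
      max_lt ha (succ_lt_P hreg hγ)⟩, le_sup_left⟩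
  · obtain ⟨c, hc, -, hca⟩ := hcond 0 (pos_iff_ne_zero.2 ha0)
    exact ⟨hc.1.trans hca, haP⟩

/-! ### Part 1: the empty set is not in the filter -/

lemma empty_not_mem (hreg : lam.IsRegular) : ∅ ∉ Dlam lam := by
  rintro ⟨-, E, g, hE, hg, hsub⟩
  obtain ⟨b, hbE, -⟩ := hE.2.1 0 P_pos
  have hbP : b < lamPlus lam := hE.1 b hbE
  classical
  set fw : Ordinal → Ordinal := fun v =>
    if h : ∃ α, α ∈ Sstat lam ∧ b < α ∧ g α = v then h.choose else 0 with hfw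
  have hfw_bdd : ∀ x < lamPlus lam, fw x < lamPlus lam := by
    intro x _
    by_cases h : ∃ α, α ∈ Sstat lam ∧ b < α ∧ g α = x
    · simp only [hfw, dif_pos h]; exact h.choose_spec.1.1
    · simp only [hfw, dif_neg h]; exact P_pos
  obtain ⟨δ, hδP, hδcof, hbδ, hδcl⟩ := exists_closure_point hreg fw hfw_bdd hbP
  have hδS : δ ∈ Sstat lam := ⟨hδP, hδcof⟩
  have hδE : δ ∈ E := club_tail hE hbE δ hbδ hδP
  have hex : ∃ α, α ∈ Sstat lam ∧ b < α ∧ g α = g δ := ⟨δ, hδS, hbδ, rfl⟩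
  obtain ⟨hαS, hbα, hgα⟩ := hex.choose_spec
  have hfwv : fw (g δ) = hex.choose := by simp only [hfw, dif_pos hex]
  have hαδ : hex.choose < δ := by
    have := hδcl (g δ) (hg δ hδS)
    rwa [hfwv] at this
  have hαE : hex.choose ∈ E := club_tail hE hbE _ hbα hαS.1
  exact hsub (show (hex.choose, δ) ∈ gen lam E g from
    ⟨hαδ, hδP, ⟨hαS, hαE⟩, ⟨hδS, hδE⟩, hgα⟩)


/-! ### An even-valued injective reshuffling of ordinals -/

/-- `ev a` recodes `a` with an even finite part. -/
noncomputable def ev (a : Ordinal) : Ordinal := ω * (a / ω) + 2 * (a % ω)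

lemma ev_mod (a : Ordinal) : ∃ n : ℕ, a % ω = n ∧ ev a % ω = ((2*n : ℕ) : Ordinal) := by
  obtain ⟨n, hn⟩ := Ordinal.lt_omega0.1 (Ordinal.mod_lt a Ordinal.omega0_ne_zero)
  refine ⟨n, hn, ?_⟩
  have h2 : (2 : Ordinal) * (a % ω) = ((2*n : ℕ) : Ordinal) := by
    rw [hn]; push_cast; ring_nf
  rw [ev, h2, Ordinal.mul_add_mod_self, Ordinal.mod_eq_of_lt (Ordinal.nat_lt_omega0 _)]

lemma ev_lt_ord {c : Cardinal} (hc : ℵ₀ ≤ c) {a : Ordinal} (ha : a < c.ord) :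
    ev a < c.ord := by
  obtain ⟨n, hn, -⟩ := ev_mod a
  rw [ev]
  refine add_lt_ord hc (lt_of_le_of_lt (Ordinal.mul_div_le a ω) ha) ?_
  have : (2:Ordinal) * (a % ω) < ω := by
    rw [hn]
    have : ((2*n:ℕ) : Ordinal) < ω := Ordinal.nat_lt_omega0 _
    simpa [Nat.cast_mul] using this
  exact lt_of_lt_of_le this (by rw [← Cardinal.ord_aleph0]; exact Cardinal.ord_le_ord.2 hc)

lemma ev_inj : Function.Injective ev := by
  intro a b h
  obtain ⟨n, hn, hmodn⟩ := ev_mod a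
  obtain ⟨m, hm, hmodm⟩ := ev_mod b
  have hnm : n = m := by
    have := hmodn.symm.trans (h ▸ hmodm)
    exact Nat.eq_of_mul_eq_mul_left two_pos (Nat.cast_inj.1 this)
  have hdiv : ω * (a / ω) = ω * (b / ω) := by
    have key : ∀ x y c d : Ordinal, c < ω → ω * x + c = ω * y + d → ¬ x < y := by
      intro x y c d hc hxy hlt
      have h1 : ω * x + c < ω * Order.succ x := by
        rw [Ordinal.mul_succ]
        exact add_lt_add_right hc _
      have h2 : ω * Order.succ x ≤ ω * y := mul_le_mul_right (Order.succ_le_of_lt hlt) ω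
      have h3 : ω * y ≤ ω * y + d := le_self_add
      exact absurd hxy (ne_of_lt (lt_of_lt_of_le h1 (h2.trans h3)))
    have h2a : (2:Ordinal) * (a % ω) < ω := by
      rw [hn]; exact_mod_cast Ordinal.nat_lt_omega0 (2*n)
    have h2b : (2:Ordinal) * (b % ω) < ω := by
      rw [hm]; exact_mod_cast Ordinal.nat_lt_omega0 (2*m)
    have hxy : ¬ a / ω < b / ω := key _ _ _ _ h2a h
    have hyx : ¬ b / ω < a / ω := key _ _ _ _ h2b h.symm
    rw [le_antisymm (not_lt.1 hyx) (not_lt.1 hxy)]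
  have : a = b := by
    conv_lhs => rw [← Ordinal.div_add_mod a ω]
    conv_rhs => rw [← Ordinal.div_add_mod b ω]
    rw [hdiv, hn, hm, hnm]
  exact this


/-! ### Coding tuples below `lamPlus lam` -/

lemma exists_emb (hreg : lam.IsRegular) (hpow : lam ^< lam = lam)
    (ι : Type) (hι : #ι < lam) :
    Nonempty ((ι → ↥(Iio (lamPlus lam))) ↪ ↥(Iio (lamPlus lam))) := by
  refine (Cardinal.le_def _ _).1 ?_
  classical
  set S : ↥(Iio (lamPlus lam)) → Set (ι → ↥(Iio (lamPlus lam))) :=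
    fun β => {t | ∀ i, (t i).val < β.val} with hSdef
  have hcover : ⋃ β, S β = Set.univ := by
    rw [Set.eq_univ_iff_forall]
    intro t
    have hB : (⨆ i, ((t i).val + 1)) < lamPlus lam :=
      Cardinal.iSup_lt_ord_of_isRegular (P_isRegular hreg)
        (hι.trans (Order.lt_succ _)) fun i => succ_lt_P hreg (t i).2
    refine Set.mem_iUnion.2 ⟨⟨_, hB⟩, fun i => ?_⟩
    exact lt_of_lt_of_le (lt_add_one _) (Ordinal.le_iSup (fun i => ((t i).val + 1)) i)
  have hmkP : #(↥(Iio (lamPlus lam))) = Cardinal.lift.{1} (Order.succ lam) := by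
    rw [Ordinal.mk_Iio_ordinal, lamPlus, card_ord]
  have hS_le : ∀ β, #(S β) ≤ Cardinal.lift.{1} lam := by
    intro β
    have hres : #(S β) ≤ #(ι → ↥(Iio β.val)) := by
      refine Cardinal.mk_le_of_injective (f := fun t i => (⟨(t.val i).val, t.2 i⟩ : ↥(Iio β.val))) ?_
      intro t1 t2 h
      refine Subtype.ext (funext fun i => Subtype.ext ?_)
      simpa using congrArg Subtype.val (congrFun h i)
    refine hres.trans ?_
    rw [Cardinal.mk_arrow, Ordinal.mk_Iio_ordinal, Cardinal.lift_lift]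
    have hcard : β.val.card ≤ lam := lt_lamPlus_iff.1 β.2
    calc Cardinal.lift.{1} β.val.card ^ Cardinal.lift.{1} #ι
        ≤ Cardinal.lift.{1} lam ^ Cardinal.lift.{1} #ι :=
          Cardinal.power_le_power_right (Cardinal.lift_le.2 hcard)
      _ = Cardinal.lift.{1} (lam ^ #ι) := by rw [← Cardinal.lift_power]
      _ ≤ Cardinal.lift.{1} lam := by
          rw [Cardinal.lift_le]
          exact (Cardinal.le_powerlt lam hι).trans_eq hpow
  calc #(ι → ↥(Iio (lamPlus lam))) = #(↥(⋃ β, S β)) := by rw [hcover]; exact Cardinal.mk_univ.symm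
    _ ≤ #(↥(Iio (lamPlus lam))) * ⨆ β, #(S β) := Cardinal.mk_iUnion_le S
    _ ≤ Cardinal.lift.{1} (Order.succ lam) * Cardinal.lift.{1} lam := by
        rw [hmkP]
        refine mul_le_mul_right ?_ _
        exact ciSup_le' hS_le
    _ = Cardinal.lift.{1} (Order.succ lam * lam) := by rw [Cardinal.lift_mul]
    _ = #(↥(Iio (lamPlus lam))) := by
        rw [hmkP, Cardinal.lift_inj]
        rw [Cardinal.mul_eq_max (hreg.aleph0_le.trans (Order.le_succ lam)) hreg.aleph0_le]
        exact max_eq_left (Order.le_succ lam)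


lemma ev_succ_mod (a : Ordinal) : ∃ n : ℕ, (ev a + 1) % ω = ((2*n+1 : ℕ) : Ordinal) := by
  obtain ⟨n, hn, -⟩ := ev_mod a
  refine ⟨n, ?_⟩
  have h1 : ev a + 1 = ω * (a / ω) + ((2*n+1 : ℕ) : Ordinal) := by
    rw [ev, hn, add_assoc]
    push_cast
    ring_nf
  rw [h1, Ordinal.mul_add_mod_self, Ordinal.mod_eq_of_lt (Ordinal.nat_lt_omega0 _)]

/-- The bound on the number of tuples below a `lam`-sized ordinal. -/
lemma mk_arrow_Iio_le (hpow : lam ^< lam = lam) {ι : Type} (hι : #ι < lam)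
    {β : Ordinal} (hβ : β.card ≤ lam) :
    #(ι → ↥(Iio β)) ≤ Cardinal.lift.{1} lam := by
  rw [Cardinal.mk_arrow, Ordinal.mk_Iio_ordinal, Cardinal.lift_lift]
  calc Cardinal.lift.{1} β.card ^ Cardinal.lift.{1} #ι
      ≤ Cardinal.lift.{1} lam ^ Cardinal.lift.{1} #ι :=
        Cardinal.power_le_power_right (Cardinal.lift_le.2 hβ)
    _ = Cardinal.lift.{1} (lam ^ #ι) := by rw [← Cardinal.lift_power]
    _ ≤ Cardinal.lift.{1} lam := by
        rw [Cardinal.lift_le]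
        exact (Cardinal.le_powerlt lam hι).trans_eq hpow

/-! ### Part 3: intersections -/

lemma inter_mem (hreg : lam.IsRegular) (hpow : lam ^< lam = lam)
    (ι : Type) (hι : #ι < lam) (f : ι → Set (Ordinal × Ordinal))
    (hf : ∀ i, f i ∈ Dlam lam) :
    ((Set.Iio (lamPlus lam) ×ˢ Set.Iio (lamPlus lam)) ∩ ⋂ i, f i) ∈ Dlam lam := by
  classical
  choose E G hE hG hsub using fun i => (hf i).2
  choose bb hbb _hbb0 using fun i => (hE i).2.1 0 P_pos
  have hbbP : ∀ i, bb i < lamPlus lam := fun i => (hE i).1 _ (hbb i)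
  obtain ⟨emb⟩ := exists_emb hreg hpow ι hι
  set toP : Ordinal → ↥(Iio (lamPlus lam)) :=
    fun x => if h : x < lamPlus lam then ⟨x, h⟩ else ⟨0, P_pos⟩ with htoP
  have htoP_eq : ∀ {x : Ordinal} (h : x < lamPlus lam), (toP x).val = x := by
    intro x h; simp [htoP, dif_pos h]
  set ec : (ι → ↥(Iio (lamPlus lam))) → Ordinal := fun t => ev (emb t).val with hec
  have hec_lt : ∀ t, ec t < lamPlus lam :=
    fun t => ev_lt_ord (hreg.aleph0_le.trans (Order.le_succ lam)) (emb t).2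
  have hec_inj : Function.Injective ec :=
    fun t1 t2 h => emb.injective (Subtype.ext (ev_inj h))
  set tup : Ordinal → (ι → ↥(Iio (lamPlus lam))) := fun μ i => toP (G i μ) with htup
  -- the closure function for tuple coding
  set F3 : Ordinal → Ordinal := fun β => (β + lam.ord + 1) ⊔
    (⨆ s : Shrink.{0} (ι → ↥(Iio β)),
      (ec (fun i => toP ((((equivShrink (ι → ↥(Iio β))).symm s) i).val)) + 1)) with hF3
  have hF3_spacing : ∀ β, β + lam.ord + 1 ≤ F3 β := fun β => le_sup_left
  have hF3_bdd : ∀ β < lamPlus lam, F3 β < lamPlus lam := by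
    intro β hβ
    refine max_lt (add_lt_P hreg (add_lt_P hreg hβ lamord_lt_P) (one_lt_P hreg)) ?_
    have hcard : #(Shrink.{0} (ι → ↥(Iio β))) < Order.succ lam := by
      have h1 : Cardinal.lift.{1} #(Shrink.{0} (ι → ↥(Iio β))) = #(ι → ↥(Iio β)) := by
        simpa using Cardinal.lift_mk_shrink'' (ι → ↥(Iio β))
      have h2 : #(ι → ↥(Iio β)) ≤ Cardinal.lift.{1} lam :=
        mk_arrow_Iio_le hpow hι (lt_lamPlus_iff.1 hβ)
      rw [← h1, Cardinal.lift_le] at h2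
      exact h2.trans_lt (Order.lt_succ lam)
    exact Cardinal.iSup_lt_ord_of_isRegular (P_isRegular hreg) hcard
      fun s => succ_lt_P hreg (hec_lt _)
  -- coded tuples sit below closure points of cofinality lam
  have htup_lt : ∀ μ, μ ∈ Sstat lam → (∀ β < μ, F3 β < μ) → ec (tup μ) < μ := by
    intro μ hμS hμcl
    have hμlim : Order.IsSuccLimit μ := S_isLimit hreg hμS.2
    set β : Ordinal := (⨆ i, (G i μ + 1)) ⊔ 1 with hβ
    have hβμ : β < μ := by
      refine max_lt ?_ ?_
      · refine Ordinal.iSup_lt_ord ?_ fun i => ?_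
        · rw [hμS.2]; exact hι
        · rw [Ordinal.add_one_eq_succ]
          exact hμlim.succ_lt (hG i μ hμS)
      · exact lt_of_lt_of_le Ordinal.one_lt_omega0
          ((Cardinal.omega0_le_ord.2 hreg.aleph0_le).trans (S_lamord_le hreg hμS.2))
    have hex : ec (tup μ) + 1 ≤ F3 β := by
      refine le_trans ?_ le_sup_right
      have hlt : ∀ i, G i μ < β := fun i =>
        lt_of_lt_of_le (lt_add_one _) (le_trans (Ordinal.le_iSup (fun i => G i μ + 1) i) le_sup_left)
      have he : ec (tup μ) + 1 = (ec fun i =>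
          toP ↑((equivShrink (ι → ↑(Iio β))).symm
            (equivShrink _ (fun i => (⟨G i μ, hlt i⟩ : ↥(Iio β)))) i)) + 1 := by
        simp [htup]
      rw [he]
      exact Ordinal.le_iSup
        (fun s => (ec fun i => toP ↑((equivShrink (ι → ↑(Iio β))).symm s i)) + 1) _
    exact lt_of_lt_of_le (lt_add_one _) (hex.trans (hμcl β hβμ).le)
  -- the closure-point club for F3
  set DD : Set Ordinal := {x | x < lamPlus lam ∧ ∀ β < x, F3 β < x} with hDD
  obtain ⟨δ₀, hδ₀P, -, hδ₀lam, hδ₀cl⟩ := exists_closure_point hreg F3 hF3_bdd lamord_lt_P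
  have hδ₀DD : δ₀ ∈ DD := ⟨hδ₀P, hδ₀cl⟩
  have hδ₀pos : (0:Ordinal) < δ₀ := lt_of_le_of_lt zero_le hδ₀lam
  -- the threshold
  set γ : Ordinal := (⨆ i, (bb i + 1)) ⊔ (δ₀ + 1) with hγ
  have hγP : γ < lamPlus lam := by
    refine max_lt ?_ (succ_lt_P hreg hδ₀P)
    exact Cardinal.iSup_lt_ord_of_isRegular (P_isRegular hreg)
      (hι.trans (Order.lt_succ _)) fun i => succ_lt_P hreg (hbbP i)
  have hδ₀γ : δ₀ < γ := lt_of_lt_of_le (lt_add_one _) le_sup_right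
  have hbbγ : ∀ i, bb i < γ := fun i => lt_of_lt_of_le (lt_add_one _)
    ((Ordinal.le_iSup (fun i => bb i + 1) i).trans le_sup_left)
  -- predecessor points in DD
  set dd : Ordinal → Ordinal := fun μ => sSup {x | x ∈ DD ∧ x < μ} with hdd
  have hdd_spec : ∀ μ, δ₀ < μ → μ < lamPlus lam → μ ∉ DD →
      dd μ ∈ DD ∧ dd μ < μ ∧ δ₀ ≤ dd μ := by
    intro μ hδμ hμP hμDD
    have hne : {x | x ∈ DD ∧ x < μ}.Nonempty := ⟨δ₀, hδ₀DD, hδμ⟩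
    have hbd : BddAbove {x | x ∈ DD ∧ x < μ} := ⟨μ, fun x hx => hx.2.le⟩
    have hle : dd μ ≤ μ := csSup_le hne fun x hx => hx.2.le
    have hcl2 : ∀ β < dd μ, F3 β < dd μ := by
      intro β hβ
      obtain ⟨x, hx, hβx⟩ := (lt_csSup_iff hbd hne).1 hβ
      exact lt_of_lt_of_le (hx.1.2 β hβx) (le_csSup hbd hx)
    have hDDmem : dd μ ∈ DD := ⟨lt_of_le_of_lt hle hμP, hcl2⟩
    refine ⟨hDDmem, lt_of_le_of_ne hle ?_, le_csSup hbd ⟨hδ₀DD, hδμ⟩⟩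
    intro h
    exact hμDD (h ▸ hDDmem)
  have hDD_dvd : ∀ d ∈ DD, 0 < d → ω ∣ d := by
    intro d hd hd0
    refine Ordinal.isSuccPrelimit_iff_omega0_dvd.1 (Order.isSuccPrelimit_of_succ_lt fun a ha => ?_)
    rw [← Ordinal.add_one_eq_succ]
    refine lt_of_le_of_lt ?_ (hd.2 a ha)
    exact le_trans (add_le_add_left (le_self_add (a := a) (b := lam.ord)) 1) (hF3_spacing a)
  -- gap coding for the non-closure points
  set A : Ordinal → Set Ordinal :=
    fun d => {μ | (μ ∈ Sstat lam ∧ γ < μ) ∧ μ ∉ DD ∧ dd μ = d} with hA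
  have hA_emb : ∀ d, Nonempty (↥(A d) ↪ ↥(Iio lam.ord)) := by
    intro d
    refine (Cardinal.le_def _ _).1 ?_
    have hmk : #(↥(A d)) ≤ Cardinal.lift.{1} lam := by
      rcases lt_or_ge d (lamPlus lam) with hdP | hdP
      · obtain ⟨δ', hδ'P, -, hdδ', hδ'cl⟩ := exists_closure_point hreg F3 hF3_bdd hdP
        have hsub2 : A d ⊆ Iio δ' := by
          intro μ hμ
          rcases lt_trichotomy μ δ' with h | h | h
          · exact h
          · exact absurd (show μ ∈ DD from h ▸ ⟨hδ'P, hδ'cl⟩) hμ.2.1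
          · exfalso
            have hbd : BddAbove {x | x ∈ DD ∧ x < μ} := ⟨μ, fun x hx => hx.2.le⟩
            have h2 : δ' ≤ dd μ := le_csSup hbd ⟨⟨hδ'P, hδ'cl⟩, h⟩
            rw [hμ.2.2] at h2
            exact absurd hdδ' (not_lt.2 h2)
        calc #(↥(A d)) ≤ #(↥(Iio δ')) := Cardinal.mk_le_mk_of_subset hsub2
          _ = Cardinal.lift.{1} δ'.card := Ordinal.mk_Iio_ordinal δ'
          _ ≤ Cardinal.lift.{1} lam := Cardinal.lift_le.2 (lt_lamPlus_iff.1 hδ'P)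
      · have hempty : A d = ∅ := by
          ext μ
          simp only [Set.mem_empty_iff_false, iff_false]
          intro hμ
          have h1 : δ₀ < μ := lt_trans hδ₀γ hμ.1.2
          have h2 := (hdd_spec μ h1 hμ.1.1.1 hμ.2.1).2.1
          rw [hμ.2.2] at h2
          exact absurd (lt_trans h2 hμ.1.1.1) (not_lt.2 hdP)
        calc #(↥(A d)) = 0 := by rw [hempty]; exact Cardinal.mk_emptyCollection _
          _ ≤ Cardinal.lift.{1} lam := zero_le
    refine hmk.trans_eq ?_
    rw [Ordinal.mk_Iio_ordinal, card_ord]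
  set eA : (d : Ordinal) → (↥(A d) ↪ ↥(Iio lam.ord)) := fun d => (hA_emb d).some with heA
  set wb : Ordinal → Ordinal := fun μ =>
    dd μ + (ev (if h : μ ∈ A (dd μ) then ((eA (dd μ)) ⟨μ, h⟩).val else 0) + 1) with hwb
  set g : Ordinal → Ordinal := fun μ =>
    if μ ∈ Sstat lam ∧ γ < μ then (if μ ∈ DD then ec (tup μ) else wb μ) else 0 with hg
  -- bad values: regressive, odd
  have hwb_facts : ∀ μ, μ ∈ Sstat lam → γ < μ → μ ∉ DD →
      wb μ < μ ∧ ∃ n : ℕ, wb μ % ω = ((2*n+1 : ℕ) : Ordinal) := by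
    intro μ hμS hγμ hμDD
    have hδμ : δ₀ < μ := lt_trans hδ₀γ hγμ
    obtain ⟨hdDD, hdlt, hδ₀d⟩ := hdd_spec μ hδμ hμS.1 hμDD
    set e : Ordinal := (if h : μ ∈ A (dd μ) then ((eA (dd μ)) ⟨μ, h⟩).val else 0) with he
    have hwbval : wb μ = dd μ + (ev e + 1) := rfl
    have helt : e < lam.ord := by
      by_cases h : μ ∈ A (dd μ)
      · rw [he, dif_pos h]; exact ((eA (dd μ)) ⟨μ, h⟩).2
      · rw [he, dif_neg h]; exact hreg.ord_pos
    have hev : ev e + 1 < lam.ord := by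
      have h1 : ev e < lam.ord := ev_lt_ord hreg.aleph0_le helt
      rw [Ordinal.add_one_eq_succ]
      exact (Cardinal.isSuccLimit_ord hreg.aleph0_le).succ_lt h1
    constructor
    · calc wb μ = dd μ + (ev e + 1) := hwbval
        _ < dd μ + lam.ord := add_lt_add_right hev _
        _ ≤ μ := add_lam_le hreg hμS.2 hdlt
    · obtain ⟨n, hn⟩ := ev_succ_mod e
      obtain ⟨k, hk⟩ := hDD_dvd _ hdDD (lt_of_lt_of_le hδ₀pos hδ₀d)
      exact ⟨n, by rw [hwbval, hk, Ordinal.mul_add_mod_self, hn]⟩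
  have hgood_mod : ∀ μ, ∃ n : ℕ, ec (tup μ) % ω = ((2*n : ℕ) : Ordinal) := by
    intro μ
    obtain ⟨n, -, h⟩ := ev_mod (emb (tup μ)).val
    exact ⟨n, h⟩
  -- g is regressive
  have hgreg : IsRegressive lam g := by
    intro μ hμS
    have hμ0 : (0:Ordinal) < μ := lt_of_lt_of_le hreg.ord_pos (S_lamord_le hreg hμS.2)
    simp only [hg]
    by_cases h1 : μ ∈ Sstat lam ∧ γ < μ
    · rw [if_pos h1]
      by_cases h2 : μ ∈ DD
      · rw [if_pos h2]; exact htup_lt μ hμS h2.2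
      · rw [if_neg h2]; exact (hwb_facts μ hμS h1.2 h2).1
    · rw [if_neg h1]; exact hμ0
  -- offsets are small
  have hoff : ∀ x : Ordinal, x < lam.ord → ev x + 1 < lam.ord := by
    intro x hx
    have h1 : ev x < lam.ord := ev_lt_ord hreg.aleph0_le hx
    rw [Ordinal.add_one_eq_succ]
    exact (Cardinal.isSuccLimit_ord hreg.aleph0_le).succ_lt h1
  have hecode : ∀ μ, (if h : μ ∈ A (dd μ) then ((eA (dd μ)) ⟨μ, h⟩).val else 0) < lam.ord := by
    intro μ
    by_cases h : μ ∈ A (dd μ)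
    · rw [dif_pos h]; exact ((eA (dd μ)) ⟨μ, h⟩).2
    · rw [dif_neg h]; exact hreg.ord_pos
  -- distinct gaps give distinct bad values
  have hcross : ∀ d1 d2 x y : Ordinal, d1 ∈ DD → d2 ∈ DD → d1 < d2 → x < lam.ord →
      d1 + x ≠ d2 + y := by
    intro d1 d2 x y hd1 hd2 h12 hx heq
    have h1 : d1 + x < d1 + lam.ord := add_lt_add_right hx _
    have h2 : d1 + lam.ord < d2 :=
      lt_of_lt_of_le (lt_of_lt_of_le (lt_add_one _) (hF3_spacing d1)) (le_of_lt (hd2.2 d1 h12))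
    have h3 : d2 ≤ d2 + y := le_self_add
    rw [heq] at h1
    exact absurd (lt_trans h1 (lt_of_lt_of_le h2 h3)) (lt_irrefl _)
  -- wb is injective on the bad points
  have hwb_inj : ∀ μ1 μ2, μ1 ∈ Sstat lam → μ2 ∈ Sstat lam → γ < μ1 → γ < μ2 →
      μ1 ∉ DD → μ2 ∉ DD → wb μ1 = wb μ2 → μ1 = μ2 := by
    intro μ1 μ2 h1S h2S hγ1 hγ2 h1D h2D heq
    obtain ⟨hdDD1, hdlt1, hδ₀d1⟩ := hdd_spec μ1 (lt_trans hδ₀γ hγ1) h1S.1 h1D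
    obtain ⟨hdDD2, hdlt2, hδ₀d2⟩ := hdd_spec μ2 (lt_trans hδ₀γ hγ2) h2S.1 h2D
    have hmem1 : μ1 ∈ A (dd μ1) := ⟨⟨h1S, hγ1⟩, h1D, rfl⟩
    have hmem2 : μ2 ∈ A (dd μ2) := ⟨⟨h2S, hγ2⟩, h2D, rfl⟩
    have hddeq : dd μ1 = dd μ2 := by
      rcases lt_trichotomy (dd μ1) (dd μ2) with h | h | h
      · exact absurd heq (hcross _ _ _ _ hdDD1 hdDD2 h (hoff _ (hecode μ1)))
      · exact h
      · exact absurd heq.symm (hcross _ _ _ _ hdDD2 hdDD1 h (hoff _ (hecode μ2)))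
    have hgen : ∀ (μ : Ordinal) (d : Ordinal) (h : μ ∈ A d), dd μ = d →
        wb μ = d + (ev ((eA d) ⟨μ, h⟩).val + 1) := by
      intro μ d h hd
      subst hd
      simp only [hwb, dif_pos h]
    have hval1 : wb μ1 = dd μ1 + (ev ((eA (dd μ1)) ⟨μ1, hmem1⟩).val + 1) :=
      hgen μ1 (dd μ1) hmem1 rfl
    have hmem2' : μ2 ∈ A (dd μ1) := hddeq ▸ hmem2
    have hval2 : wb μ2 = dd μ1 + (ev ((eA (dd μ1)) ⟨μ2, hmem2'⟩).val + 1) :=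
      hgen μ2 (dd μ1) hmem2' hddeq.symm
    rw [hval1, hval2] at heq
    have h5 := add_left_cancel_iff.1 heq
    rw [Ordinal.add_one_eq_succ, Ordinal.add_one_eq_succ] at h5
    have h6 := ev_inj (Order.succ_injective h5)
    have h7 := (eA (dd μ1)).injective (Subtype.ext h6)
    exact congrArg Subtype.val h7
  -- key property : collisions of g are collisions of every G i
  have hkey : ∀ α β, α ∈ Sstat lam → β ∈ Sstat lam → γ < α → γ < β → α < β →
      g α = g β → ∀ i, G i α = G i β := by
    intro α β hαS hβS hγα hγβ hαβ hgeq i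
    have hval : ∀ μ, μ ∈ Sstat lam → γ < μ →
        g μ = if μ ∈ DD then ec (tup μ) else wb μ := by
      intro μ h1 h2
      simp only [hg]
      rw [if_pos (show μ ∈ Sstat lam ∧ γ < μ from ⟨h1, h2⟩)]
    rw [hval α hαS hγα, hval β hβS hγβ] at hgeq
    by_cases hαD : α ∈ DD <;> by_cases hβD : β ∈ DD
    · -- both closure points : tuple coding is injective
      rw [if_pos hαD, if_pos hβD] at hgeq
      have h1 := hec_inj hgeq
      have h2 := congrArg Subtype.val (congrFun h1 i)
      simp only [htup] at h2
      have hGα : G i α < lamPlus lam := lt_trans (hG i α hαS) hαS.1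
      have hGβ : G i β < lamPlus lam := lt_trans (hG i β hβS) hβS.1
      rwa [htoP_eq hGα, htoP_eq hGβ] at h2
    · -- parity contradiction
      rw [if_pos hαD, if_neg hβD] at hgeq
      obtain ⟨n, hn⟩ := hgood_mod α
      obtain ⟨-, m, hm⟩ := hwb_facts β hβS hγβ hβD
      rw [hgeq] at hn
      exact absurd (Nat.cast_inj.1 (hn.symm.trans hm)) (by omega)
    · -- parity contradiction
      rw [if_neg hαD, if_pos hβD] at hgeq
      obtain ⟨n, hn⟩ := hgood_mod β
      obtain ⟨-, m, hm⟩ := hwb_facts α hαS hγα hαD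
      rw [← hgeq] at hn
      exact absurd (Nat.cast_inj.1 (hn.symm.trans hm)) (by omega)
    · -- both bad : wb is injective, contradicting α < β
      rw [if_neg hαD, if_neg hβD] at hgeq
      exact absurd (hwb_inj α β hαS hβS hγα hγβ hαD hβD hgeq) hαβ.ne
  -- conclusion
  refine ⟨Set.inter_subset_left, {x | γ < x ∧ x < lamPlus lam}, g,
    tail_isClub hreg hγP, hgreg, ?_⟩
  rintro ⟨α, β⟩ ⟨hαβ, hβP, ⟨hαS, hαE⟩, ⟨hβS, hβE⟩, hgeq⟩
  refine ⟨⟨hαE.2, hβP⟩, Set.mem_iInter.2 fun i => ?_⟩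
  refine hsub i ⟨hαβ, hβP, ⟨hαS, ?_⟩, ⟨hβS, ?_⟩,
    hkey α β hαS hβS hαE.1 hβE.1 hαβ hgeq i⟩
  · exact club_tail (hE i) (hbb i) α (lt_trans (hbbγ i) hαE.1) hαE.2
  · exact club_tail (hE i) (hbb i) β (lt_trans (hbbγ i) hβE.1) hβP

end Helpers

/-- D_λ^0 is a λ-complete filter on λ⁺ × λ⁺: it does not contain ∅, is closed under
supersets (within the square), and closed under intersections of fewer than λ members. -/
theorem stmt0 (lam : Cardinal) (hreg : lam.IsRegular) (hpow : lam ^< lam = lam) :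
    ∅ ∉ Dlam lam ∧
    (∀ X Y : Set (Ordinal × Ordinal), X ∈ Dlam lam → X ⊆ Y →
      Y ⊆ Set.Iio (lamPlus lam) ×ˢ Set.Iio (lamPlus lam) → Y ∈ Dlam lam) ∧
    (∀ (ι : Type) (_ : #ι < lam) (f : ι → Set (Ordinal × Ordinal)),
      (∀ i, f i ∈ Dlam lam) →
      ((Set.Iio (lamPlus lam) ×ˢ Set.Iio (lamPlus lam)) ∩ ⋂ i, f i) ∈ Dlam lam) := by
  refine ⟨empty_not_mem hreg, ?_, fun ι hι f hf => inter_mem hreg hpow ι hι f hf⟩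
  intro X Y hX hXY hYsq
  obtain ⟨-, E, g, h1, h2, h3⟩ := hX
  exact ⟨hYsq, E, g, h1, h2, h3.trans hXY⟩

end Stmt0
end

section
/- Suppose λ is regular with λ = λ^{<λ}, and for each α < λ⁺ we are given u_α ∈ [Ord]^{<λ} and f_α : u_α → λ, together with g : ∪_{α<λ⁺} u_α → D_λ^0. Then the set of pairs (α,β) with α < β < λ⁺ such that (f_α, f_β) is a Δ-system pair and for every ξ ∈ u_α ∩ u_β we have (α,β) ∈ g(ξ), belongs to D_λ^0. -/
open Cardinal Set

namespace Stmt2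

noncomputable def lamPlus (lam : Cardinal) : Ordinal := (Order.succ lam).ord

def Sstat (lam : Cardinal) : Set Ordinal :=
  {δ | δ < lamPlus lam ∧ δ.cof = lam}

def IsClub (lam : Cardinal) (E : Set Ordinal) : Prop :=
  (∀ a ∈ E, a < lamPlus lam) ∧
  (∀ a < lamPlus lam, ∃ b ∈ E, a ≤ b) ∧
  (∀ a < lamPlus lam, a ≠ 0 → (∀ b < a, ∃ c ∈ E, b ≤ c ∧ c < a) → a ∈ E)

def IsRegressive (lam : Cardinal) (g : Ordinal → Ordinal) : Prop :=
  ∀ δ ∈ Sstat lam, g δ < δ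

def gen (lam : Cardinal) (E : Set Ordinal) (g : Ordinal → Ordinal) :
    Set (Ordinal × Ordinal) :=
  {p | p.1 < p.2 ∧ p.2 < lamPlus lam ∧ p.1 ∈ Sstat lam ∩ E ∧ p.2 ∈ Sstat lam ∩ E ∧
    g p.1 = g p.2}

def Dlam (lam : Cardinal) : Set (Set (Ordinal × Ordinal)) :=
  {X | X ⊆ Set.Iio (lamPlus lam) ×ˢ Set.Iio (lamPlus lam) ∧
    ∃ E g, IsClub lam E ∧ IsRegressive lam g ∧ gen lam E g ⊆ X}

noncomputable def otp (u : Set Ordinal) : Ordinal :=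
  Ordinal.type ((· < ·) : u → u → Prop)

def DeltaSystemPair (u₁ u₂ : Set Ordinal) (f₁ f₂ : Ordinal → Ordinal) : Prop :=
  otp u₁ = otp u₂ ∧
  ∀ a ∈ u₁ ∩ u₂, otp (u₁ ∩ Set.Iio a) = otp (u₂ ∩ Set.Iio a) ∧ f₁ a = f₂ a

/-! ### descend -/

noncomputable def descend (o : Ordinal.{1}) : Ordinal.{0} :=
  letI := Classical.dec (∃ a : Ordinal.{0}, Ordinal.lift.{1,0} a = o)
  if h : ∃ a : Ordinal.{0}, Ordinal.lift.{1,0} a = o then h.choose else 0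

theorem lift_descend {o : Ordinal.{1}} {b : Ordinal.{0}} (h : o ≤ Ordinal.lift.{1,0} b) :
    Ordinal.lift.{1,0} (descend o) = o := by
  obtain ⟨a, ha⟩ := Ordinal.mem_range_lift_of_le h
  have hex : ∃ a : Ordinal.{0}, Ordinal.lift.{1,0} a = o := ⟨a, ha⟩
  rw [descend]
  simp only [hex, dite_true]
  exact hex.choose_spec

theorem descend_lt {o : Ordinal.{1}} {b : Ordinal.{0}} (h : o < Ordinal.lift.{1,0} b) :
    descend o < b := by
  rw [← Ordinal.lift_lt.{1,0}, lift_descend h.le]; exact h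

theorem descend_inj {o o' : Ordinal.{1}} {b : Ordinal.{0}} (ho : o ≤ Ordinal.lift.{1,0} b)
    (ho' : o' ≤ Ordinal.lift.{1,0} b) (h : descend o = descend o') : o = o' := by
  rw [← lift_descend ho, ← lift_descend ho', h]

theorem descend_lift (a : Ordinal.{0}) : descend (Ordinal.lift.{1,0} a) = a := by
  have := lift_descend (o := Ordinal.lift.{1,0} a) (b := a) le_rfl
  exact Ordinal.lift_inj.mp this

/-! ### otp / enumeration machinery -/

noncomputable def nth (s : Set Ordinal.{0}) (i : Ordinal.{1}) (h : i < otp s) : Ordinal.{0} :=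
  (Ordinal.enum ((· < ·) : s → s → Prop) ⟨i, h⟩ : s).val

noncomputable def idx (s : Set Ordinal.{0}) (ξ : Ordinal.{0}) (h : ξ ∈ s) : Ordinal.{1} :=
  Ordinal.typein ((· < ·) : s → s → Prop) ⟨ξ, h⟩

theorem idx_lt_otp {s : Set Ordinal.{0}} {ξ : Ordinal.{0}} (h : ξ ∈ s) :
    idx s ξ h < otp s :=
  Ordinal.typein_lt_type _ _

theorem nth_mem {s : Set Ordinal.{0}} {i : Ordinal.{1}} (h : i < otp s) : nth s i h ∈ s :=
  (Ordinal.enum ((· < ·) : s → s → Prop) ⟨i, h⟩ : s).2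

theorem nth_idx {s : Set Ordinal.{0}} {ξ : Ordinal.{0}} (h : ξ ∈ s) :
    nth s (idx s ξ h) (idx_lt_otp h) = ξ := by
  have := Ordinal.enum_typein ((· < ·) : s → s → Prop) ⟨ξ, h⟩
  exact congrArg Subtype.val this

theorem idx_nth {s : Set Ordinal.{0}} {i : Ordinal.{1}} (h : i < otp s) :
    idx s (nth s i h) (nth_mem h) = i := by
  have := Ordinal.typein_enum ((· < ·) : s → s → Prop) (o := i) h
  exact this

theorem mem_iff_nth {s : Set Ordinal.{0}} {ξ : Ordinal.{0}} :
    ξ ∈ s ↔ ∃ i h, nth s i h = ξ := by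
  constructor
  · intro h; exact ⟨idx s ξ h, idx_lt_otp h, nth_idx h⟩
  · rintro ⟨i, h, rfl⟩; exact nth_mem h

theorem card_otp (s : Set Ordinal.{0}) : (otp s).card = #s := Ordinal.card_type _

theorem otp_lt_lift {s : Set Ordinal.{0}} {c : Cardinal.{0}} (h : #s < Cardinal.lift.{1,0} c) :
    otp s < Ordinal.lift.{1,0} c.ord := by
  rw [Cardinal.lift_ord, Cardinal.lt_ord, card_otp]
  exact h

/-- `idx` equals the order type of the initial part. -/
theorem idx_eq_otp_inter {s : Set Ordinal.{0}} {ξ : Ordinal.{0}} (h : ξ ∈ s) :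
    idx s ξ h = otp (s ∩ Iio ξ) := by
  rw [idx, ← Ordinal.type_subrel ((· < ·) : s → s → Prop) ⟨ξ, h⟩, otp]
  apply Ordinal.type_eq.mpr
  constructor
  exact RelIso.symm
    { toFun := fun x => ⟨⟨x.1, x.2.1⟩, x.2.2⟩
      invFun := fun x => ⟨x.1.1, x.1.2, x.2⟩
      left_inv := fun x => rfl
      right_inv := fun x => rfl
      map_rel_iff' := Iff.rfl }

theorem otp_inter_inj {s : Set Ordinal.{0}} {ξ ξ' : Ordinal.{0}} (h : ξ ∈ s) (h' : ξ' ∈ s)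
    (he : otp (s ∩ Iio ξ) = otp (s ∩ Iio ξ')) : ξ = ξ' := by
  rw [← idx_eq_otp_inter h, ← idx_eq_otp_inter h'] at he
  have := Ordinal.typein_injective ((· < ·) : s → s → Prop) he
  exact congrArg Subtype.val this

end Stmt2
section Part2
open Cardinal Set
namespace Stmt2

variable {lam : Cardinal.{0}}

theorem lamPlus_isLimit (hreg : lam.IsRegular) : Order.IsSuccLimit (lamPlus lam) :=
  Cardinal.isSuccLimit_ord (hreg.aleph0_le.trans (Order.le_succ _))

theorem lamPlus_pos (hreg : lam.IsRegular) : 0 < lamPlus lam := (lamPlus_isLimit hreg).pos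

theorem ord_lt_lamPlus : lam.ord < lamPlus lam :=
  Cardinal.ord_lt_ord.mpr (Order.lt_succ _)

theorem omega_le_ord (hreg : lam.IsRegular) : Ordinal.omega0 ≤ lam.ord := by
  rw [← Cardinal.ord_aleph0]
  exact Cardinal.ord_le_ord.mpr hreg.aleph0_le

theorem lam_ord_ne_zero (hreg : lam.IsRegular) : lam.ord ≠ 0 := by
  intro h
  have := omega_le_ord hreg
  rw [h] at this
  exact absurd this (by simpa using Ordinal.omega0_pos.ne')

theorem card_le_of_lt_lamPlus {x : Ordinal} (h : x < lamPlus lam) : x.card ≤ lam := by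
  rw [lamPlus, Cardinal.lt_ord] at h
  exact Order.lt_succ_iff.mp h

theorem Sstat_ord_le {δ : Ordinal} (hδ : δ ∈ Sstat lam) : lam.ord ≤ δ := by
  have h1 : lam ≤ δ.card := hδ.2 ▸ Ordinal.cof_le_card δ
  calc lam.ord ≤ δ.card.ord := Cardinal.ord_le_ord.mpr h1
    _ ≤ δ := Cardinal.ord_card_le δ

theorem Sstat_pos (hreg : lam.IsRegular) {δ : Ordinal} (hδ : δ ∈ Sstat lam) : 0 < δ :=
  lt_of_lt_of_le (by simpa [Cardinal.lt_ord] using hreg.pos) (Sstat_ord_le hδ)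

theorem Sstat_mod_zero (hreg : lam.IsRegular) {δ : Ordinal} (hδ : δ ∈ Sstat lam) :
    δ % lam.ord = 0 := by
  by_contra hr
  have hdm := Ordinal.div_add_mod δ lam.ord
  have hcof : δ.cof = (δ % lam.ord).cof := by
    conv_lhs => rw [← hdm]
    exact Ordinal.cof_add _ hr
  have h1 : (δ % lam.ord).cof ≤ (δ % lam.ord).card := Ordinal.cof_le_card _
  have h2 : (δ % lam.ord).card < lam := by
    rw [← Cardinal.lt_ord]
    exact Ordinal.mod_lt δ (lam_ord_ne_zero hreg)
  have := hδ.2 ▸ hcof ▸ (h1.trans_lt h2)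
  exact absurd this (lt_irrefl _)

/-- key arithmetic: for δ ∈ S and γ < δ, `⌊γ⌋ + λ.ord ≤ δ`. -/
theorem floor_add_le (hreg : lam.IsRegular) {δ γ : Ordinal} (hδ : δ ∈ Sstat lam)
    (hγ : γ < δ) : lam.ord * (γ / lam.ord) + lam.ord ≤ δ := by
  have h0 : lam.ord ≠ 0 := lam_ord_ne_zero hreg
  have hdm := Ordinal.div_add_mod δ lam.ord
  rw [Sstat_mod_zero hreg hδ, add_zero] at hdm
  have hq : γ / lam.ord < δ / lam.ord := by
    rw [Ordinal.div_lt h0, hdm]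
    exact hγ
  calc lam.ord * (γ / lam.ord) + lam.ord = lam.ord * (γ / lam.ord + 1) := by
        rw [mul_add_one]
    _ ≤ lam.ord * (δ / lam.ord) := by
        apply mul_le_mul_right
        exact Order.add_one_le_iff.mpr hq
    _ = δ := hdm

theorem one_add_lt_ord (hreg : lam.IsRegular) {x : Ordinal} (h : x < lam.ord) :
    1 + x < lam.ord := by
  rcases lt_or_ge x Ordinal.omega0 with h1 | h1
  · have h2 : 1 + x < Ordinal.omega0 := by
      rcases Ordinal.lt_omega0.mp h1 with ⟨n, rfl⟩
      have : ((1 + n : ℕ) : Ordinal) = 1 + (n : Ordinal) := by push_cast; ring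
      rw [← this]
      exact Ordinal.nat_lt_omega0 _
    exact h2.trans_le (omega_le_ord hreg)
  · rwa [Ordinal.one_add_of_omega0_le h1]

/-- Every "club" in this formulation contains the tail above any of its elements. -/
theorem isClub_mem_of_le {E : Set Ordinal} (hE : IsClub lam E) {η x : Ordinal}
    (hη : η ∈ E) (hx : η ≤ x) (hxΛ : x < lamPlus lam) : x ∈ E := by
  induction x using Ordinal.induction with
  | h x IH =>
    rcases eq_or_lt_of_le hx with rfl | hlt
    · exact hη
    · have hx0 : x ≠ 0 := by
        intro h0
        rw [h0] at hlt
        exact absurd hlt not_lt_zero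
      apply hE.2.2 x hxΛ hx0
      intro b hb
      rcases le_or_gt b η with hbη | hηb
      · exact ⟨η, hη, hbη, hlt⟩
      · exact ⟨b, IH b hb hηb.le (hb.trans hxΛ), le_rfl, hb⟩

theorem isClub_nonempty (hreg : lam.IsRegular) {E : Set Ordinal} (hE : IsClub lam E) :
    E.Nonempty := by
  obtain ⟨b, hb, -⟩ := hE.2.1 0 (lamPlus_pos hreg)
  exact ⟨b, hb⟩

theorem isClub_tail (hreg : lam.IsRegular) : IsClub lam {x | lam.ord < x ∧ x < lamPlus lam} := by
  refine ⟨fun a ha => ha.2, ?_, ?_⟩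
  · intro a ha
    rcases le_or_gt a lam.ord with h | h
    · refine ⟨lam.ord + 1, ⟨?_, ?_⟩, ?_⟩
      · exact lt_add_one _
      · exact (lamPlus_isLimit hreg).succ_lt ord_lt_lamPlus
      · exact h.trans (le_of_lt (lt_add_one _))
    · exact ⟨a, ⟨h, ha⟩, le_rfl⟩
  · intro a haΛ ha0 hcl
    refine ⟨?_, haΛ⟩
    obtain ⟨c, hc, -, hca⟩ := hcl 0 (pos_iff_ne_zero.mpr ha0)
    exact hc.1.trans hca

end Stmt2
end Part2
section Part3
open Cardinal Set
namespace Stmt2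

abbrev IioO (x : Ordinal.{0}) : Type 1 := ↥(Set.Iio x)

/-- value tuples stored in codes -/
abbrev Vt : Type 1 := Ordinal.{0} × Ordinal.{0} × Ordinal.{0} × Ordinal.{0} × Ordinal.{0}

/-- the data coded for each δ -/
abbrev DataT : Type 1 :=
  Ordinal.{0} × (Ordinal.{0} → Option Vt) × (Ordinal.{0} → Option Vt)

def VBdd (γ : Ordinal.{0}) (v : Vt) : Prop :=
  v.1 < γ ∧ v.2.1 < γ ∧ v.2.2.1 < γ ∧ v.2.2.2.1 < γ ∧ v.2.2.2.2 < γ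

def FnBdd (lam : Cardinal.{0}) (γ : Ordinal.{0}) (Φ : Ordinal.{0} → Option Vt) : Prop :=
  (∃ ρ < lam.ord, ∀ i, (Φ i).isSome = true ↔ i < ρ) ∧
  (∀ i v, Φ i = some v → VBdd γ v)

def Bdd (lam : Cardinal.{0}) (γ : Ordinal.{0}) (d : DataT) : Prop :=
  d.1 < lam.ord ∧ FnBdd lam γ d.2.1 ∧ FnBdd lam γ d.2.2

variable {lam : Cardinal.{0}}

theorem FnBdd_mono {γ γ' : Ordinal.{0}} (h : γ ≤ γ') {Φ} (hΦ : FnBdd lam γ Φ) :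
    FnBdd lam γ' Φ := by
  refine ⟨hΦ.1, fun i v hv => ?_⟩
  obtain ⟨a, b, c, d, e⟩ := hΦ.2 i v hv
  exact ⟨a.trans_le h, b.trans_le h, c.trans_le h, d.trans_le h, e.trans_le h⟩

theorem Bdd_mono {γ γ' : Ordinal.{0}} (h : γ ≤ γ') {d} (hd : Bdd lam γ d) : Bdd lam γ' d :=
  ⟨hd.1, FnBdd_mono h hd.2.1, FnBdd_mono h hd.2.2⟩

theorem mk_IioO_le {γ : Ordinal.{0}} (h : γ < lamPlus lam) :
    #(IioO γ) ≤ Cardinal.lift.{1,0} lam := by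
  rw [IioO, Ordinal.mk_Iio_ordinal]
  exact Cardinal.lift_le.mpr (card_le_of_lt_lamPlus h)

theorem mk_IioO_ord : #(IioO lam.ord) = Cardinal.lift.{1,0} lam := by
  rw [IioO, Ordinal.mk_Iio_ordinal, Cardinal.card_ord]

theorem mk_FnBdd (hreg : lam.IsRegular) (hpow : lam ^< lam = lam) {γ : Ordinal.{0}}
    (hγ : γ < lamPlus lam) :
    #{Φ : Ordinal.{0} → Option Vt // FnBdd lam γ Φ} ≤ Cardinal.lift.{1,0} lam := by
  classical
  set μ := Cardinal.lift.{1,0} lam with hμ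
  have hμinf : ℵ₀ ≤ μ := Cardinal.aleph0_le_lift.mpr hreg.aleph0_le
  set C : Type 1 := IioO γ × IioO γ × IioO γ × IioO γ × IioO γ with hC
  have hcodom : #C ≤ μ := by
    have h1 : #(IioO γ) ≤ μ := mk_IioO_le hγ
    have e1 : #C = #(IioO γ) * (#(IioO γ) * (#(IioO γ) * (#(IioO γ) * #(IioO γ)))) := by
      rw [hC]
      simp [Cardinal.mk_prod, Cardinal.lift_id, mul_assoc]
    rw [e1]
    calc #(IioO γ) * (#(IioO γ) * (#(IioO γ) * (#(IioO γ) * #(IioO γ))))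
        ≤ μ * (μ * (μ * (μ * μ))) := by
          exact mul_le_mul' h1 (mul_le_mul' h1 (mul_le_mul' h1 (mul_le_mul' h1 h1)))
      _ = μ := by rw [Cardinal.mul_eq_self hμinf, Cardinal.mul_eq_self hμinf,
            Cardinal.mul_eq_self hμinf, Cardinal.mul_eq_self hμinf]
  have main : #{Φ : Ordinal.{0} → Option Vt // FnBdd lam γ Φ} ≤
      #(Σ ρ : IioO lam.ord, (IioO ρ.1 → C)) := by
    have hinj : ∃ J : {Φ : Ordinal.{0} → Option Vt // FnBdd lam γ Φ} →
        (Σ ρ : IioO lam.ord, (IioO ρ.1 → C)), Function.Injective J := by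
      refine ⟨fun Φ => ?_, ?_⟩
      · have hρ := Φ.2.1
        refine ⟨⟨hρ.choose, hρ.choose_spec.1⟩, fun i => ?_⟩
        have hsome : (Φ.1 i.1).isSome = true := (hρ.choose_spec.2 i.1).mpr i.2
        have hveq : Φ.1 i.1 = some ((Φ.1 i.1).get hsome) := (Option.some_get hsome).symm
        have hb := Φ.2.2 i.1 _ hveq
        exact (⟨_, hb.1⟩, ⟨_, hb.2.1⟩, ⟨_, hb.2.2.1⟩, ⟨_, hb.2.2.2.1⟩, ⟨_, hb.2.2.2.2⟩)
      · intro Φ Ψ hJ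
        have hρΦ := Φ.2.1
        have hρΨ := Ψ.2.1
        have h1 : hρΦ.choose = hρΨ.choose := congrArg (fun t => t.1.1) hJ
        have h1' : (⟨hρΦ.choose, hρΦ.choose_spec.1⟩ : IioO lam.ord) =
            ⟨hρΨ.choose, hρΨ.choose_spec.1⟩ := Subtype.ext h1
        have h2 := (Sigma.mk.inj_iff.mp hJ).2
        apply Subtype.ext
        funext i
        rcases lt_or_ge i hρΦ.choose with hi | hi
        · have hsomeΦ : (Φ.1 i).isSome = true := (hρΦ.choose_spec.2 i).mpr hi
          have hsomeΨ : (Ψ.1 i).isSome = true := (hρΨ.choose_spec.2 i).mpr (h1 ▸ hi)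
          have hveqΦ : Φ.1 i = some ((Φ.1 i).get hsomeΦ) := (Option.some_get hsomeΦ).symm
          have hveqΨ : Ψ.1 i = some ((Ψ.1 i).get hsomeΨ) := (Option.some_get hsomeΨ).symm
          rw [hveqΦ, hveqΨ]
          have hext := congrArg (fun t : Σ ρ : IioO lam.ord, (IioO ρ.1 → C) =>
            (if h : i < t.1.1 then some (((t.2 ⟨i, h⟩).1.1, (t.2 ⟨i, h⟩).2.1.1,
              (t.2 ⟨i, h⟩).2.2.1.1, (t.2 ⟨i, h⟩).2.2.2.1.1, (t.2 ⟨i, h⟩).2.2.2.2.1) : Vt)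
            else none)) hJ
          simp only [dif_pos hi, dif_pos (h1 ▸ hi : i < hρΨ.choose)] at hext
          have h5 := Option.some.inj hext
          simp only [Prod.mk.injEq] at h5
          have hv : (Φ.1 i).get hsomeΦ = (Ψ.1 i).get hsomeΨ :=
            Prod.ext h5.1 (Prod.ext h5.2.1 (Prod.ext h5.2.2.1
              (Prod.ext h5.2.2.2.1 h5.2.2.2.2)))
          rw [hv]
        · have hnΦ : Φ.1 i = none := by
            rw [← Option.not_isSome_iff_eq_none]
            intro hs
            exact absurd ((hρΦ.choose_spec.2 i).mp (by simpa using hs)) (not_lt.mpr hi)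
          have hnΨ : Ψ.1 i = none := by
            rw [← Option.not_isSome_iff_eq_none]
            intro hs
            exact absurd ((hρΨ.choose_spec.2 i).mp (by simpa using hs)) (not_lt.mpr (h1 ▸ hi))
          rw [hnΦ, hnΨ]
    obtain ⟨J, hJ⟩ := hinj
    exact Cardinal.mk_le_of_injective hJ
  refine main.trans ?_
  rw [Cardinal.mk_sigma]
  have hbound : ∀ ρ : IioO lam.ord, #(IioO ρ.1 → C) ≤ μ := by
    intro ρ
    have hexp : #(IioO ρ.1) = Cardinal.lift.{1,0} ρ.1.card := Ordinal.mk_Iio_ordinal ρ.1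
    have hexplt : ρ.1.card < lam := Cardinal.lt_ord.mp ρ.2
    calc #(IioO ρ.1 → C) = #C ^ #(IioO ρ.1) := (Cardinal.power_def _ _).symm
      _ ≤ μ ^ #(IioO ρ.1) := Cardinal.power_le_power_right hcodom
      _ = Cardinal.lift.{1,0} (lam ^ ρ.1.card) := by rw [hexp, hμ, Cardinal.lift_power]
      _ ≤ Cardinal.lift.{1,0} (lam ^< lam) :=
          Cardinal.lift_le.mpr (Cardinal.le_powerlt lam hexplt)
      _ = μ := by rw [hpow]
  refine le_trans (Cardinal.sum_le_sum _ (fun _ => μ) hbound) ?_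
  rw [Cardinal.sum_const' _ μ, mk_IioO_ord, Cardinal.mul_eq_self hμinf]

theorem mk_Bdd (hreg : lam.IsRegular) (hpow : lam ^< lam = lam) {γ : Ordinal.{0}}
    (hγ : γ < lamPlus lam) :
    #{d : DataT // Bdd lam γ d} ≤ Cardinal.lift.{1,0} lam := by
  set μ := Cardinal.lift.{1,0} lam with hμ
  have hμinf : ℵ₀ ≤ μ := Cardinal.aleph0_le_lift.mpr hreg.aleph0_le
  have hinj : Function.Injective
      (fun d : {d : DataT // Bdd lam γ d} =>
        ((⟨d.1.1, d.2.1⟩ : IioO lam.ord),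
         (⟨d.1.2.1, d.2.2.1⟩ : {Φ // FnBdd lam γ Φ}),
         (⟨d.1.2.2, d.2.2.2⟩ : {Φ // FnBdd lam γ Φ}))) := by
    intro d d' h
    simp only [Prod.mk.injEq, Subtype.mk.injEq] at h
    apply Subtype.ext
    exact Prod.ext (congrArg Subtype.val h.1) (Prod.ext h.2.1 h.2.2)
  have e1 : #(IioO lam.ord × ({Φ // FnBdd lam γ Φ} × {Φ // FnBdd lam γ Φ})) =
      #(IioO lam.ord) * (#{Φ // FnBdd lam γ Φ} * #{Φ // FnBdd lam γ Φ}) := by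
    simp [Cardinal.mk_prod, Cardinal.lift_id]
  calc #{d : DataT // Bdd lam γ d}
      ≤ #(IioO lam.ord × ({Φ // FnBdd lam γ Φ} × {Φ // FnBdd lam γ Φ})) :=
        Cardinal.mk_le_of_injective hinj
    _ = #(IioO lam.ord) * (#{Φ // FnBdd lam γ Φ} * #{Φ // FnBdd lam γ Φ}) := e1
    _ ≤ μ * (μ * μ) := by
        refine mul_le_mul' (le_of_eq mk_IioO_ord) ?_
        exact mul_le_mul' (mk_FnBdd hreg hpow hγ) (mk_FnBdd hreg hpow hγ)
    _ = μ := by rw [Cardinal.mul_eq_self hμinf, Cardinal.mul_eq_self hμinf]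

theorem exists_emb {α : Type 1} (h : #α ≤ Cardinal.lift.{1,0} lam) :
    Nonempty (α ↪ IioO lam.ord) := by
  rw [← mk_IioO_ord] at h
  exact Cardinal.le_def _ _ |>.mp h

end Stmt2
end Part3
section Part4
open Cardinal Set
namespace Stmt2

variable {lam : Cardinal.{0}}

/-- decomposition uniqueness: `λ.ord * A + s` determines `(A, s)` when `s < λ.ord`. -/
theorem mul_add_inj (hreg : lam.IsRegular) {A s A' s' : Ordinal}
    (hs : s < lam.ord) (hs' : s' < lam.ord)
    (h : lam.ord * A + s = lam.ord * A' + s') : A = A' ∧ s = s' := by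
  have h0 : lam.ord ≠ 0 := lam_ord_ne_zero hreg
  have hdiv := congrArg (· / lam.ord) h
  simp only [Ordinal.mul_add_div _ h0] at hdiv
  rw [Ordinal.div_eq_zero_of_lt hs, Ordinal.div_eq_zero_of_lt hs', add_zero, add_zero] at hdiv
  subst hdiv
  exact ⟨rfl, add_left_cancel_iff.mp h⟩

theorem Sstat_isLimit (hreg : lam.IsRegular) {δ : Ordinal} (hδ : δ ∈ Sstat lam) :
    Order.IsSuccLimit δ := by
  rw [← Ordinal.aleph0_le_cof, hδ.2]
  exact hreg.aleph0_le

theorem nth_eq_of_eq {s : Set Ordinal.{0}} {i i' : Ordinal.{1}} (h : i < otp s) (e : i = i') :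
    nth s i h = nth s i' (e ▸ h) := by subst e; rfl

theorem mem_S_Ord_le (hreg : lam.IsRegular) {δ : Ordinal} (hδ : δ ∈ Sstat lam)
    (h : lam.ord < δ) : lam.ord + 1 < δ :=
  (Sstat_isLimit hreg hδ).succ_lt h

theorem idx_congr {s t : Set Ordinal.{0}} (hst : s = t) {ξ : Ordinal} (hm : ξ ∈ s) :
    idx s ξ hm = idx t ξ (hst ▸ hm) := by subst hst; rfl

end Stmt2
end Part4
section Part5
open Cardinal Set
namespace Stmt2

/-- Given u_α ∈ [Ord]^{<λ}, f_α : u_α → λ (for α < λ⁺) and g into D_λ^0, the set of pairs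
(α,β) with α < β < λ⁺ such that (f_α,f_β) is a Δ-system pair and (α,β) ∈ g(ξ) for every
ξ ∈ u_α ∩ u_β, belongs to D_λ^0. -/
theorem stmt2 (lam : Cardinal) (hreg : lam.IsRegular) (hpow : lam ^< lam = lam)
    (u : Ordinal → Set Ordinal)
    (hu : ∀ α < lamPlus lam, #(u α) < Cardinal.lift.{1,0} lam)
    (f : Ordinal → Ordinal → Ordinal)
    (hf : ∀ α < lamPlus lam, ∀ ξ ∈ u α, f α ξ < lam.ord)
    (g : Ordinal → Set (Ordinal × Ordinal))
    (hg : ∀ ξ ∈ ⋃ α ∈ Set.Iio (lamPlus lam), u α, g ξ ∈ Dlam lam) :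
    {p : Ordinal × Ordinal | p.1 < p.2 ∧ p.2 < lamPlus lam ∧
      DeltaSystemPair (u p.1) (u p.2) (f p.1) (f p.2) ∧
      ∀ ξ ∈ u p.1 ∩ u p.2, p ∈ g ξ} ∈ Dlam lam := by
  classical
  set U : Set Ordinal := ⋃ α ∈ Set.Iio (lamPlus lam), u α with hUdef
  have hμinf : ℵ₀ ≤ Cardinal.lift.{1,0} lam := Cardinal.aleph0_le_lift.mpr hreg.aleph0_le
  -- choose club/regressive witnesses for each ξ
  have hch : ∀ ξ : Ordinal, ∃ Eg : Set Ordinal × (Ordinal → Ordinal),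
      ξ ∈ U → IsClub lam Eg.1 ∧ IsRegressive lam Eg.2 ∧ gen lam Eg.1 Eg.2 ⊆ g ξ := by
    intro ξ
    by_cases h : ξ ∈ U
    · obtain ⟨-, E1, g1, h1, h2, h3⟩ := hg ξ h
      exact ⟨(E1, g1), fun _ => ⟨h1, h2, h3⟩⟩
    · exact ⟨(∅, fun _ => 0), fun hx => absurd hx h⟩
  choose Eg hEg using hch
  set E : Ordinal → Set Ordinal := fun ξ => (Eg ξ).1 with hEdef
  set gx : Ordinal → Ordinal → Ordinal := fun ξ => (Eg ξ).2 with hgxdef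
  set η : Ordinal → Ordinal := fun ξ => sInf (E ξ) with hηdef
  have hηE : ∀ ξ ∈ U, η ξ ∈ E ξ := by
    intro ξ hξ
    exact csInf_mem (isClub_nonempty hreg (hEg ξ hξ).1)
  have hηΛ : ∀ ξ ∈ U, η ξ < lamPlus lam := fun ξ hξ => (hEg ξ hξ).1.1 _ (hηE ξ hξ)
  have htail : ∀ ξ ∈ U, ∀ x, η ξ ≤ x → x < lamPlus lam → x ∈ E ξ := by
    intro ξ hξ x h1 h2
    exact isClub_mem_of_le (hEg ξ hξ).1 (hηE ξ hξ) h1 h2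
  -- first appearance
  set ι : Ordinal → Ordinal := fun ξ => sInf {a | a < lamPlus lam ∧ ξ ∈ u a} with hιdef
  have hιspec : ∀ ξ ∈ U, ι ξ < lamPlus lam ∧ ξ ∈ u (ι ξ) := by
    intro ξ hξ
    have hne : {a | a < lamPlus lam ∧ ξ ∈ u a}.Nonempty := by
      simp only [hUdef, mem_iUnion] at hξ
      obtain ⟨a, ha, hm⟩ := hξ
      exact ⟨a, ha, hm⟩
    exact csInf_mem hne
  have hιle : ∀ ξ a, a < lamPlus lam → ξ ∈ u a → ι ξ ≤ a := by
    intro ξ a ha hm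
    exact csInf_le' ⟨ha, hm⟩
  have hmemU : ∀ a < lamPlus lam, ∀ ξ ∈ u a, ξ ∈ U := by
    intro a ha ξ hm
    simp only [hUdef, mem_iUnion]
    exact ⟨a, ha, hm⟩
  -- pairing function below lam.ord
  obtain ⟨pe⟩ : Nonempty ((IioO lam.ord × IioO lam.ord) ↪ IioO lam.ord) := by
    apply exists_emb
    have : #(IioO lam.ord × IioO lam.ord) = #(IioO lam.ord) * #(IioO lam.ord) := by
      simp [Cardinal.mk_prod, Cardinal.lift_id]
    rw [this, mk_IioO_ord]
    exact le_of_eq (Cardinal.mul_eq_self hμinf)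
  set p2 : Ordinal → Ordinal → Ordinal := fun a b =>
    if h : a < lam.ord ∧ b < lam.ord then (pe (⟨a, h.1⟩, ⟨b, h.2⟩)).1 else 0 with hp2def
  have hp2lt : ∀ a b, p2 a b < lam.ord := by
    intro a b
    rw [hp2def]
    dsimp only
    split
    · exact (pe _).2
    · rw [pos_iff_ne_zero]
      exact fun h => lam_ord_ne_zero hreg (by simpa [h] using (lam_ord_ne_zero hreg))
  have hp2inj : ∀ a b a' b', a < lam.ord → b < lam.ord → a' < lam.ord → b' < lam.ord →
      p2 a b = p2 a' b' → a = a' ∧ b = b' := by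
    intro a b a' b' ha hb ha' hb' h
    rw [hp2def] at h
    dsimp only at h
    rw [dif_pos ⟨ha, hb⟩, dif_pos ⟨ha', hb'⟩] at h
    have := pe.injective (Subtype.ext h)
    simp only [Prod.mk.injEq, Subtype.mk.injEq] at this
    exact ⟨congrArg Subtype.val this.1, congrArg Subtype.val this.2⟩
  -- otp of subsets of the u's is small
  have hsub : ∀ a < lamPlus lam, ∀ s : Set Ordinal, s ⊆ u a →
      otp s < Ordinal.lift.{1,0} lam.ord := by
    intro a ha s hs
    exact otp_lt_lift ((Cardinal.mk_le_mk_of_subset hs).trans_lt (hu a ha))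
  -- π : injective coding of elements of U
  set π : Ordinal → Ordinal := fun ξ =>
    lam.ord * (ι ξ / lam.ord) + p2 (ι ξ % lam.ord) (descend (otp (u (ι ξ) ∩ Iio ξ))) with hπdef
  have hπlt : ∀ ξ ∈ U, ∀ δ ∈ Sstat lam, ι ξ < δ → π ξ < δ := by
    intro ξ hξ δ hδ hι
    calc π ξ < lam.ord * (ι ξ / lam.ord) + lam.ord := by
          exact add_lt_add_right (hp2lt _ _) _
      _ ≤ δ := floor_add_le hreg hδ hι
  have hπinj : ∀ ξ ∈ U, ∀ ξ' ∈ U, π ξ = π ξ' → ξ = ξ' := by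
    intro ξ hξ ξ' hξ' h
    rw [hπdef] at h
    dsimp only at h
    have hd1 : descend (otp (u (ι ξ) ∩ Iio ξ)) < lam.ord :=
      descend_lt (hsub (ι ξ) (hιspec ξ hξ).1 _ inter_subset_left)
    have hd2 : descend (otp (u (ι ξ') ∩ Iio ξ')) < lam.ord :=
      descend_lt (hsub (ι ξ') (hιspec ξ' hξ').1 _ inter_subset_left)
    obtain ⟨hq, hs⟩ := mul_add_inj hreg (hp2lt _ _) (hp2lt _ _) h
    obtain ⟨hr, hdd⟩ := hp2inj _ _ _ _ (Ordinal.mod_lt _ (lam_ord_ne_zero hreg))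
      hd1 (Ordinal.mod_lt _ (lam_ord_ne_zero hreg)) hd2 hs
    have hιeq : ι ξ = ι ξ' := by
      have e1 := Ordinal.div_add_mod (ι ξ) lam.ord
      have e2 := Ordinal.div_add_mod (ι ξ') lam.ord
      rw [hq, hr] at e1
      rw [e2] at e1
      exact e1.symm
    rw [← hιeq] at hdd hd2
    have hoeq : otp (u (ι ξ) ∩ Iio ξ) = otp (u (ι ξ) ∩ Iio ξ') :=
      descend_inj (b := lam.ord)
        (le_of_lt (hsub (ι ξ) (hιspec ξ hξ).1 _ inter_subset_left))
        (le_of_lt (hsub (ι ξ) (hιspec ξ hξ).1 _ inter_subset_left))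
        hdd
    exact otp_inter_inj (hιspec ξ hξ).2 (hιeq ▸ (hιspec ξ' hξ').2) hoeq
  -- the two parts of each u-set, and auxiliary data
  set w : Ordinal → Set Ordinal := fun δ => u δ ∩ Iio δ with hwdef
  set o : Ordinal → Set Ordinal := fun δ => {ξ | ξ ∈ u δ ∧ δ ≤ ξ ∧ ι ξ < δ} with hodef
  have hwsub : ∀ δ, w δ ⊆ u δ := fun δ => inter_subset_left
  have hosub : ∀ δ, o δ ⊆ u δ := fun δ x hx => hx.1
  set ee : Ordinal → Ordinal → Ordinal := fun δ ξ => if η ξ < δ then η ξ + 1 else 0 with heedef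
  set bigs : Ordinal → Set Ordinal := fun δ => {ξ | ξ ∈ w δ ∪ o δ ∧ δ ≤ η ξ} with hbigsdef
  set D : Ordinal → DataT := fun δ =>
    (descend (otp (u δ)),
     fun i => if h : Ordinal.lift.{1,0} i < otp (w δ) then
        some ((nth (w δ) (Ordinal.lift.{1,0} i) h,
               f δ (nth (w δ) (Ordinal.lift.{1,0} i) h),
               gx (nth (w δ) (Ordinal.lift.{1,0} i) h) δ,
               ee δ (nth (w δ) (Ordinal.lift.{1,0} i) h), 0) : Vt)
      else none,
     fun j => if h : Ordinal.lift.{1,0} j < otp (o δ) then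
        some ((π (nth (o δ) (Ordinal.lift.{1,0} j) h),
               f δ (nth (o δ) (Ordinal.lift.{1,0} j) h),
               gx (nth (o δ) (Ordinal.lift.{1,0} j) h) δ,
               ee δ (nth (o δ) (Ordinal.lift.{1,0} j) h),
               descend (otp (u δ ∩ Iio (nth (o δ) (Ordinal.lift.{1,0} j) h)))) : Vt)
      else none) with hDdef
  -- value lemmas
  have hΦval : ∀ δ, δ < lamPlus lam → ∀ ξ, ∀ hm : ξ ∈ w δ,
      (D δ).2.1 (descend (idx (w δ) ξ hm)) = some ((ξ, f δ ξ, gx ξ δ, ee δ ξ, 0) : Vt) := by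
    intro δ hδ ξ hm
    have hlt : idx (w δ) ξ hm < otp (w δ) := idx_lt_otp hm
    have hld : Ordinal.lift.{1,0} (descend (idx (w δ) ξ hm)) = idx (w δ) ξ hm :=
      lift_descend (le_of_lt (hlt.trans (hsub δ hδ _ (hwsub δ))))
    have hc : Ordinal.lift.{1,0} (descend (idx (w δ) ξ hm)) < otp (w δ) := by
      rw [hld]; exact hlt
    have key : ∀ h : Ordinal.lift.{1,0} (descend (idx (w δ) ξ hm)) < otp (w δ),
        nth (w δ) (Ordinal.lift.{1,0} (descend (idx (w δ) ξ hm))) h = ξ := by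
      intro h
      rw [nth_eq_of_eq h hld]
      exact nth_idx hm
    rw [hDdef]
    dsimp only
    rw [dif_pos hc, key hc]
  have hΨval : ∀ δ, δ < lamPlus lam → ∀ ξ, ∀ hm : ξ ∈ o δ,
      (D δ).2.2 (descend (idx (o δ) ξ hm)) =
        some ((π ξ, f δ ξ, gx ξ δ, ee δ ξ, descend (otp (u δ ∩ Iio ξ))) : Vt) := by
    intro δ hδ ξ hm
    have hlt : idx (o δ) ξ hm < otp (o δ) := idx_lt_otp hm
    have hld : Ordinal.lift.{1,0} (descend (idx (o δ) ξ hm)) = idx (o δ) ξ hm :=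
      lift_descend (le_of_lt (hlt.trans (hsub δ hδ _ (hosub δ))))
    have hc : Ordinal.lift.{1,0} (descend (idx (o δ) ξ hm)) < otp (o δ) := by
      rw [hld]; exact hlt
    have key : ∀ h : Ordinal.lift.{1,0} (descend (idx (o δ) ξ hm)) < otp (o δ),
        nth (o δ) (Ordinal.lift.{1,0} (descend (idx (o δ) ξ hm))) h = ξ := by
      intro h
      rw [nth_eq_of_eq h hld]
      exact nth_idx hm
    rw [hDdef]
    dsimp only
    rw [dif_pos hc, key hc]
  -- boundedness of the data of each good δ
  have hDbdd : ∀ δ, δ ∈ Sstat lam → lam.ord < δ → δ < lamPlus lam →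
      ∃ γ, (lam.ord < γ ∧ Bdd lam γ (D δ)) ∧ γ < δ := by
    intro δ hδS hδord hδΛ
    have hδlim : Order.IsSuccLimit δ := Sstat_isLimit hreg hδS
    have hδ0 : (0 : Ordinal) < δ := hδlim.pos
    set Bf : ↥(u δ) → Ordinal.{1} := fun ξ => Ordinal.lift.{1,0}
      ((if ξ.1 < δ then ξ.1 else 0) ⊔ (if π ξ.1 < δ then π ξ.1 else 0) ⊔
       (if gx ξ.1 δ < δ then gx ξ.1 δ else 0) ⊔ (if η ξ.1 + 1 < δ then η ξ.1 + 1 else 0))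
      with hBf
    have hBflt : ∀ ξ, Bf ξ < Ordinal.lift.{1,0} δ := by
      intro ξ
      rw [hBf]
      dsimp only
      rw [Ordinal.lift_lt]
      apply max_lt (max_lt (max_lt ?_ ?_) ?_) ?_ <;>
        · split_ifs with h
          · exact h
          · exact hδ0
    have hsBlt : (⨆ ξ : ↥(u δ), Bf ξ) < Ordinal.lift.{1,0} δ := by
      apply Ordinal.iSup_lt_ord_lift.{1,0} ?_ hBflt
      rw [← Ordinal.lift_cof, hδS.2]
      simpa using hu δ hδΛ
    set sB := (⨆ ξ : ↥(u δ), Bf ξ) with hsB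
    set γ₀ := (lam.ord + 1) ⊔ (descend sB + 1) with hγ₀
    have hγ₀δ : γ₀ < δ := by
      apply max_lt (mem_S_Ord_le hreg hδS hδord)
      have := hδlim.succ_lt (descend_lt hsBlt)
      rwa [← Ordinal.add_one_eq_succ] at this
    have hγ₀ord : lam.ord < γ₀ := lt_max_iff.mpr (Or.inl (lt_add_one _))
    have hγ₀0 : (0 : Ordinal) < γ₀ := zero_le.trans_lt hγ₀ord
    have hBle : ∀ (ξ : ↥(u δ)) (x : Ordinal), Ordinal.lift.{1,0} x ≤ Bf ξ → x < γ₀ := by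
      intro ξ x hx
      have h1 : Bf ξ ≤ sB := Ordinal.le_iSup Bf ξ
      have h2 : Ordinal.lift.{1,0} x ≤ Ordinal.lift.{1,0} (descend sB) := by
        rw [lift_descend (le_of_lt hsBlt)]
        exact hx.trans h1
      exact lt_of_le_of_lt (Ordinal.lift_le.mp h2)
        (lt_of_lt_of_le (lt_add_one _) (le_max_right _ _))
    have hbound1 : ∀ ξ : ↥(u δ), ξ.1 < δ → ξ.1 < γ₀ := by
      intro ξ h
      apply hBle ξ
      rw [hBf]
      dsimp only
      rw [Ordinal.lift_le, if_pos h]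
      exact (le_sup_left.trans le_sup_left).trans le_sup_left
    have hbound2 : ∀ ξ : ↥(u δ), π ξ.1 < δ → π ξ.1 < γ₀ := by
      intro ξ h
      apply hBle ξ
      rw [hBf]
      dsimp only
      rw [Ordinal.lift_le, if_pos h]
      exact (le_sup_right.trans le_sup_left).trans le_sup_left
    have hbound3 : ∀ ξ : ↥(u δ), gx ξ.1 δ < δ → gx ξ.1 δ < γ₀ := by
      intro ξ h
      apply hBle ξ
      rw [hBf]
      dsimp only
      rw [Ordinal.lift_le, if_pos h]
      exact le_sup_right.trans le_sup_left
    have hbound4 : ∀ ξ : ↥(u δ), η ξ.1 + 1 < δ → η ξ.1 + 1 < γ₀ := by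
      intro ξ h
      apply hBle ξ
      rw [hBf]
      dsimp only
      rw [Ordinal.lift_le, if_pos h]
      exact le_sup_right
    have heebound : ∀ ξ : ↥(u δ), ee δ ξ.1 < γ₀ := by
      intro ξ
      rw [heedef]
      dsimp only
      split_ifs with h
      · apply hbound4
        have := hδlim.succ_lt h
        rwa [← Ordinal.add_one_eq_succ] at this
      · exact hγ₀0
    refine ⟨γ₀, ⟨hγ₀ord, ?_, ?_, ?_⟩, hγ₀δ⟩
    · rw [hDdef]
      exact descend_lt (hsub δ hδΛ (u δ) (subset_refl _))
    · constructor
      · refine ⟨descend (otp (w δ)), descend_lt (hsub δ hδΛ _ (hwsub δ)), ?_⟩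
        intro i
        have hldw : Ordinal.lift.{1,0} (descend (otp (w δ))) = otp (w δ) :=
          lift_descend (le_of_lt (hsub δ hδΛ _ (hwsub δ)))
        rw [hDdef]
        dsimp only
        by_cases h : Ordinal.lift.{1,0} i < otp (w δ)
        · rw [dif_pos h]
          simp only [Option.isSome_some, true_iff]
          rw [← Ordinal.lift_lt.{1,0}, hldw]
          exact h
        · rw [dif_neg h]
          simp only [Option.isSome_none, false_iff, not_lt, Bool.false_eq_true]
          rw [← Ordinal.lift_le.{1,0}, hldw]
          exact not_lt.mp h
      · intro i v hv
        rw [hDdef] at hv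
        dsimp only at hv
        by_cases h : Ordinal.lift.{1,0} i < otp (w δ)
        · rw [dif_pos h] at hv
          have hv' := Option.some.inj hv
          subst hv'
          set ξ : Ordinal := nth (w δ) (Ordinal.lift.{1,0} i) h with hξ
          have hmw : ξ ∈ w δ := nth_mem h
          have hmu : ξ ∈ u δ := hwsub δ hmw
          have hξU : ξ ∈ U := hmemU δ hδΛ ξ hmu
          refine ⟨hbound1 ⟨ξ, hmu⟩ hmw.2, ?_, ?_, ?_, hγ₀0⟩
          · exact lt_trans (hf δ hδΛ ξ hmu) hγ₀ord
          · exact hbound3 ⟨ξ, hmu⟩ ((hEg ξ hξU).2.1 δ hδS)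
          · exact heebound ⟨ξ, hmu⟩
        · rw [dif_neg h] at hv
          exact absurd hv (by simp)
    · constructor
      · refine ⟨descend (otp (o δ)), descend_lt (hsub δ hδΛ _ (hosub δ)), ?_⟩
        intro i
        have hldo : Ordinal.lift.{1,0} (descend (otp (o δ))) = otp (o δ) :=
          lift_descend (le_of_lt (hsub δ hδΛ _ (hosub δ)))
        rw [hDdef]
        dsimp only
        by_cases h : Ordinal.lift.{1,0} i < otp (o δ)
        · rw [dif_pos h]
          simp only [Option.isSome_some, true_iff]
          rw [← Ordinal.lift_lt.{1,0}, hldo]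
          exact h
        · rw [dif_neg h]
          simp only [Option.isSome_none, false_iff, not_lt, Bool.false_eq_true]
          rw [← Ordinal.lift_le.{1,0}, hldo]
          exact not_lt.mp h
      · intro i v hv
        rw [hDdef] at hv
        dsimp only at hv
        by_cases h : Ordinal.lift.{1,0} i < otp (o δ)
        · rw [dif_pos h] at hv
          have hv' := Option.some.inj hv
          subst hv'
          set ξ : Ordinal := nth (o δ) (Ordinal.lift.{1,0} i) h with hξ
          have hmo : ξ ∈ o δ := nth_mem h
          have hmu : ξ ∈ u δ := hosub δ hmo
          have hξU : ξ ∈ U := hmemU δ hδΛ ξ hmu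
          refine ⟨hbound2 ⟨ξ, hmu⟩ (hπlt ξ hξU δ hδS hmo.2.2), ?_, ?_, ?_, ?_⟩
          · exact lt_trans (hf δ hδΛ ξ hmu) hγ₀ord
          · exact hbound3 ⟨ξ, hmu⟩ ((hEg ξ hξU).2.1 δ hδS)
          · exact heebound ⟨ξ, hmu⟩
          · exact lt_trans (descend_lt (hsub δ hδΛ _ inter_subset_left)) hγ₀ord
        · rw [dif_neg h] at hv
          exact absurd hv (by simp)
  -- pressing-down injections on bounded subsets of S
  have hθch : ∀ ξ : Ordinal, ∃ eθ : Ordinal → Ordinal,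
      ξ ∈ U → (∀ δ, eθ δ < lam.ord) ∧
        (∀ δ δ', δ ∈ Sstat lam ∩ Iic (η ξ) → δ' ∈ Sstat lam ∩ Iic (η ξ) →
          eθ δ = eθ δ' → δ = δ') := by
    intro ξ
    by_cases h : ξ ∈ U
    · have hcard : #(↥(Sstat lam ∩ Iic (η ξ))) ≤ Cardinal.lift.{1,0} lam := by
        have h1 : (Sstat lam ∩ Iic (η ξ)) ⊆ Iio (η ξ + 1) := by
          intro x hx
          exact lt_of_le_of_lt (mem_Iic.mp hx.2) (lt_add_one _)
        refine (Cardinal.mk_le_mk_of_subset h1).trans ?_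
        rw [Ordinal.mk_Iio_ordinal]
        apply Cardinal.lift_le.mpr
        apply card_le_of_lt_lamPlus
        have := (lamPlus_isLimit hreg).succ_lt (hηΛ ξ h)
        rwa [← Ordinal.add_one_eq_succ] at this
      obtain ⟨emb⟩ := exists_emb (lam := lam) hcard
      refine ⟨fun δ => if hm : δ ∈ Sstat lam ∩ Iic (η ξ) then (emb ⟨δ, hm⟩).1 else 0,
        fun _ => ⟨?_, ?_⟩⟩
      · intro δ
        dsimp only
        split_ifs with hm
        · exact (emb ⟨δ, hm⟩).2
        · exact pos_iff_ne_zero.mpr (lam_ord_ne_zero hreg)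
      · intro δ δ' hm hm' he
        dsimp only at he
        rw [dif_pos hm, dif_pos hm'] at he
        have := emb.injective (Subtype.ext he)
        exact congrArg Subtype.val this
    · exact ⟨fun _ => 0, fun hx => absurd hx h⟩
  choose θf hθf using hθch
  -- index functions for bounded data
  have heBch : ∀ γ : Ordinal, ∃ eγ : DataT → Ordinal,
      γ < lamPlus lam → (∀ d, eγ d < lam.ord) ∧
        (∀ d d', Bdd lam γ d → Bdd lam γ d' → eγ d = eγ d' → d = d') := by
    intro γ
    by_cases h : γ < lamPlus lam
    · obtain ⟨emb⟩ := exists_emb (lam := lam) (mk_Bdd hreg hpow h)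
      refine ⟨fun d => if hm : Bdd lam γ d then (emb ⟨d, hm⟩).1 else 0, fun _ => ⟨?_, ?_⟩⟩
      · intro d
        dsimp only
        split_ifs with hm
        · exact (emb ⟨d, hm⟩).2
        · exact pos_iff_ne_zero.mpr (lam_ord_ne_zero hreg)
      · intro d d' hd hd' he
        dsimp only at he
        rw [dif_pos hd, dif_pos hd'] at he
        have := emb.injective (Subtype.ext he)
        exact congrArg Subtype.val this
    · exact ⟨fun _ => 0, fun hx => absurd hx h⟩
  choose eB heB using heBch
  -- canonical bound for the data of δ
  set γf : Ordinal → Ordinal := fun δ => sInf {γ | lam.ord < γ ∧ Bdd lam γ (D δ)} with hγfdef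
  have hγf : ∀ δ, δ ∈ Sstat lam → lam.ord < δ → δ < lamPlus lam →
      (lam.ord < γf δ ∧ Bdd lam (γf δ) (D δ)) ∧ γf δ < δ := by
    intro δ h1 h2 h3
    obtain ⟨γ, hγ, hγδ⟩ := hDbdd δ h1 h2 h3
    have hne : {γ | lam.ord < γ ∧ Bdd lam γ (D δ)}.Nonempty := ⟨γ, hγ⟩
    exact ⟨csInf_mem hne, lt_of_le_of_lt (csInf_le' hγ) hγδ⟩
  -- marker for "big" elements
  set ψ : Ordinal → Ordinal := fun δ =>
    if δ ∈ Sstat lam ∧ (bigs δ).Nonempty ∧ sInf (bigs δ) ∈ U ∧ δ ≤ η (sInf (bigs δ)) then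
      1 + θf (sInf (bigs δ)) δ
    else 0 with hψdef
  have hψlt : ∀ δ, ψ δ < lam.ord := by
    intro δ
    rw [hψdef]
    dsimp only
    split_ifs with h
    · exact one_add_lt_ord hreg ((hθf _ h.2.2.1).1 _)
    · exact pos_iff_ne_zero.mpr (lam_ord_ne_zero hreg)
  -- the regressive function
  set G : Ordinal → Ordinal := fun δ =>
    if δ ∈ Sstat lam ∧ lam.ord < δ ∧ δ < lamPlus lam then
      lam.ord * (γf δ / lam.ord) + p2 (γf δ % lam.ord) (p2 (eB (γf δ) (D δ)) (ψ δ))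
    else 0 with hGdef
  refine ⟨?_, ⟨{x | lam.ord < x ∧ x < lamPlus lam}, G, isClub_tail hreg, ?_, ?_⟩⟩
  · rintro ⟨α, β⟩ ⟨h1, h2, -⟩
    exact ⟨lt_trans h1 h2, h2⟩
  · -- regressive
    intro δ hδ
    rw [hGdef]
    dsimp only
    split_ifs with h
    · calc lam.ord * (γf δ / lam.ord) + p2 (γf δ % lam.ord) (p2 (eB (γf δ) (D δ)) (ψ δ))
          < lam.ord * (γf δ / lam.ord) + lam.ord := add_lt_add_right (hp2lt _ _) _
        _ ≤ δ := floor_add_le hreg hδ (hγf δ h.1 h.2.1 h.2.2).2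
    · exact Sstat_pos hreg hδ
  · -- gen ⊆ target
    rintro ⟨α, β⟩ ⟨hαβ, hβΛ, ⟨hαS, hαE⟩, ⟨hβS, hβE⟩, hGeq⟩
    have hαΛ : α < lamPlus lam := hαE.2
    have hαord : lam.ord < α := hαE.1
    have hβord : lam.ord < β := hβE.1
    have hcα : α ∈ Sstat lam ∧ lam.ord < α ∧ α < lamPlus lam := ⟨hαS, hαord, hαΛ⟩
    have hcβ : β ∈ Sstat lam ∧ lam.ord < β ∧ β < lamPlus lam := ⟨hβS, hβord, hβΛ⟩
    rw [hGdef] at hGeq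
    dsimp only at hGeq
    rw [if_pos hcα, if_pos hcβ] at hGeq
    obtain ⟨hq, hs⟩ := mul_add_inj hreg (hp2lt _ _) (hp2lt _ _) hGeq
    obtain ⟨hr, hinner⟩ := hp2inj _ _ _ _ (Ordinal.mod_lt _ (lam_ord_ne_zero hreg))
      (hp2lt _ _) (Ordinal.mod_lt _ (lam_ord_ne_zero hreg)) (hp2lt _ _) hs
    have hγeq : γf α = γf β := by
      have e1 := Ordinal.div_add_mod (γf α) lam.ord
      have e2 := Ordinal.div_add_mod (γf β) lam.ord
      rw [hq, hr] at e1
      rw [e2] at e1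
      exact e1.symm
    have hγαΛ : γf α < lamPlus lam := lt_trans (hγf α hcα.1 hcα.2.1 hcα.2.2).2 hαΛ
    obtain ⟨heidx, hψeq⟩ := hp2inj _ _ _ _ ((heB _ hγαΛ).1 _) (hψlt α)
      ((heB _ (hγeq ▸ hγαΛ)).1 _) (hψlt β) hinner
    -- the coded data coincide
    have hDeq : D α = D β := by
      rw [← hγeq] at heidx
      exact (heB (γf α) hγαΛ).2 (D α) (D β) (hγf α hcα.1 hcα.2.1 hcα.2.2).1.2
        (by rw [hγeq]; exact (hγf β hcβ.1 hcβ.2.1 hcβ.2.2).1.2) heidx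
    -- consequences
    have hotpuu : otp (u α) = otp (u β) := by
      have h1 := congrArg Prod.fst hDeq
      rw [hDdef] at h1
      dsimp only at h1
      exact descend_inj (le_of_lt (hsub α hαΛ _ (subset_refl _)))
        (le_of_lt (hsub β hβΛ _ (subset_refl _))) h1
    have hweq : w α = w β := by
      have hfun : (D α).2.1 = (D β).2.1 := congrArg (fun d : DataT => d.2.1) hDeq
      have key : ∀ δ δ', δ < lamPlus lam → δ' < lamPlus lam →
          (D δ).2.1 = (D δ').2.1 → w δ ⊆ w δ' := by
        intro δ δ' hδ hδ' hf12 ξ hm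
        have hv := hΦval δ hδ ξ hm
        rw [hf12, hDdef] at hv
        dsimp only at hv
        by_cases h : Ordinal.lift.{1,0} (descend (idx (w δ) ξ hm)) < otp (w δ')
        · rw [dif_pos h] at hv
          have hc1 := congrArg (fun v : Vt => v.1) (Option.some.inj hv)
          dsimp only at hc1
          rw [← hc1]
          exact nth_mem h
        · rw [dif_neg h] at hv
          exact absurd hv (by simp)
      exact Set.Subset.antisymm (key α β hαΛ hβΛ hfun) (key β α hβΛ hαΛ hfun.symm)
    have hΦdata : ∀ ξ, ∀ hm : ξ ∈ w α, f α ξ = f β ξ ∧ gx ξ α = gx ξ β ∧ ee α ξ = ee β ξ := by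
      intro ξ hm
      have hm' : ξ ∈ w β := by rw [← hweq]; exact hm
      have h1 := hΦval α hαΛ ξ hm
      have h2 := hΦval β hβΛ ξ hm'
      have hidx : idx (w α) ξ hm = idx (w β) ξ hm' := idx_congr hweq hm
      rw [hDeq, hidx] at h1
      rw [h1] at h2
      have h3 := Option.some.inj h2
      simp only [Prod.mk.injEq] at h3
      exact ⟨h3.2.1, h3.2.2.1, h3.2.2.2.1⟩
    have hoeq : o α = o β := by
      have hfun : (D α).2.2 = (D β).2.2 := congrArg (fun d : DataT => d.2.2) hDeq
      have key : ∀ δ δ', δ < lamPlus lam → δ' < lamPlus lam →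
          (D δ).2.2 = (D δ').2.2 → o δ ⊆ o δ' := by
        intro δ δ' hδ hδ' hf12 ξ hm
        have hv := hΨval δ hδ ξ hm
        rw [hf12, hDdef] at hv
        dsimp only at hv
        by_cases h : Ordinal.lift.{1,0} (descend (idx (o δ) ξ hm)) < otp (o δ')
        · rw [dif_pos h] at hv
          have hc1 := congrArg (fun v : Vt => v.1) (Option.some.inj hv)
          dsimp only at hc1
          have hmem' := nth_mem h
          have heq : nth (o δ') (Ordinal.lift.{1,0} (descend (idx (o δ) ξ hm))) h = ξ :=
            hπinj _ (hmemU δ' hδ' _ (hosub δ' hmem')) _ (hmemU δ hδ _ (hosub δ hm)) hc1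
          rw [← heq]
          exact hmem'
        · rw [dif_neg h] at hv
          exact absurd hv (by simp)
      exact Set.Subset.antisymm (key α β hαΛ hβΛ hfun) (key β α hβΛ hαΛ hfun.symm)
    have hΨdata : ∀ ξ, ∀ hm : ξ ∈ o α, f α ξ = f β ξ ∧ gx ξ α = gx ξ β ∧ ee α ξ = ee β ξ ∧
        otp (u α ∩ Iio ξ) = otp (u β ∩ Iio ξ) := by
      intro ξ hm
      have hm' : ξ ∈ o β := by rw [← hoeq]; exact hm
      have h1 := hΨval α hαΛ ξ hm
      have h2 := hΨval β hβΛ ξ hm'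
      have hidx : idx (o α) ξ hm = idx (o β) ξ hm' := idx_congr hoeq hm
      rw [hDeq, hidx] at h1
      rw [h1] at h2
      have h3 := Option.some.inj h2
      simp only [Prod.mk.injEq] at h3
      refine ⟨h3.2.1, h3.2.2.1, h3.2.2.2.1, ?_⟩
      exact descend_inj (le_of_lt (hsub α hαΛ _ inter_subset_left))
        (le_of_lt (hsub β hβΛ _ inter_subset_left)) h3.2.2.2.2
    have heeiff : ∀ ξ, ξ ∈ w α ∪ o α → (α ≤ η ξ ↔ β ≤ η ξ) := by
      intro ξ hξ
      have hee : ee α ξ = ee β ξ := by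
        rcases hξ with h | h
        exacts [(hΦdata ξ h).2.2, (hΨdata ξ h).2.2.1]
      rw [heedef] at hee
      dsimp only at hee
      have hpos : (0 : Ordinal) < η ξ + 1 := lt_of_le_of_lt zero_le (lt_add_one _)
      constructor
      · intro h1
        by_contra h2
        rw [if_neg (not_lt.mpr h1), if_pos (not_le.mp h2)] at hee
        exact absurd (hee ▸ hpos) (lt_irrefl _)
      · intro h1
        by_contra h2
        rw [if_pos (not_le.mp h2), if_neg (not_lt.mpr h1)] at hee
        exact absurd (hee.symm ▸ hpos) (lt_irrefl _)
    have hbigseq : bigs α = bigs β := by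
      rw [hbigsdef]
      ext ξ
      simp only [Set.mem_setOf_eq]
      constructor
      · rintro ⟨h1, h2⟩
        refine ⟨?_, (heeiff ξ h1).mp h2⟩
        rw [← hweq, ← hoeq]
        exact h1
      · rintro ⟨h1, h2⟩
        have h1' : ξ ∈ w α ∪ o α := by rw [hweq, hoeq]; exact h1
        exact ⟨h1', (heeiff ξ h1').mpr h2⟩
    have hbigsempty : ¬ (bigs α).Nonempty := by
      intro hne
      have hmemα : sInf (bigs α) ∈ bigs α := csInf_mem hne
      have hmemα' : sInf (bigs α) ∈ w α ∪ o α ∧ α ≤ η (sInf (bigs α)) := by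
        have := hmemα
        rw [hbigsdef] at this
        exact this
      have hξU : sInf (bigs α) ∈ U := by
        rcases hmemα'.1 with h | h
        exacts [hmemU α hαΛ _ (hwsub α h), hmemU α hαΛ _ (hosub α h)]
      have hmemβ : sInf (bigs α) ∈ bigs β := by rw [← hbigseq]; exact hmemα
      have hmemβ' : sInf (bigs α) ∈ w β ∪ o β ∧ β ≤ η (sInf (bigs α)) := by
        have := hmemβ
        rw [hbigsdef] at this
        exact this
      rw [hψdef] at hψeq
      dsimp only at hψeq
      rw [← hbigseq] at hψeq
      rw [if_pos ⟨hαS, hne, hξU, hmemα'.2⟩, if_pos ⟨hβS, hne, hξU, hmemβ'.2⟩] at hψeq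
      have hth := add_left_cancel_iff.mp hψeq
      have := (hθf _ hξU).2 α β ⟨hαS, hmemα'.2⟩ ⟨hβS, hmemβ'.2⟩ hth
      exact absurd this (ne_of_lt hαβ)
    have hshared : ∀ ξ, ξ ∈ u α → ξ ∈ u β → ξ ∈ w α ∪ o α := by
      intro ξ h1 h2
      rcases lt_or_ge ξ α with h | h
      · left
        rw [hwdef]
        exact ⟨h1, h⟩
      · rcases lt_or_ge ξ β with h' | h' 
        · have hw : ξ ∈ w α := by
            rw [hweq, hwdef]
            exact ⟨h2, h'⟩
          have : ξ < α := by
            rw [hwdef] at hw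
            exact hw.2
          exact absurd this (not_lt.mpr h)
        · right
          rw [hoeq, hodef]
          exact ⟨h2, h', lt_of_le_of_lt (hιle ξ α hαΛ h1) hαβ⟩
    have hηsmall : ∀ ξ, ξ ∈ w α ∪ o α → η ξ < α := by
      intro ξ hξ
      by_contra h
      apply hbigsempty
      refine ⟨ξ, ?_⟩
      rw [hbigsdef]
      exact ⟨hξ, not_lt.mp h⟩
    have hdata : ∀ ξ, ξ ∈ w α ∪ o α → f α ξ = f β ξ ∧ gx ξ α = gx ξ β := by
      rintro ξ (h | h)
      exacts [⟨(hΦdata ξ h).1, (hΦdata ξ h).2.1⟩, ⟨(hΨdata ξ h).1, (hΨdata ξ h).2.1⟩]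
    refine ⟨hαβ, hβΛ, ⟨hotpuu, ?_⟩, ?_⟩
    · intro a ha
      have hsh := hshared a ha.1 ha.2
      rcases hsh with h | h
      · have haα : a < α := by rw [hwdef] at h; exact h.2
        have hseteq : u α ∩ Iio a = u β ∩ Iio a := by
          ext x
          constructor
          · rintro ⟨hx1, hx2⟩
            have hxw : x ∈ w α := by
              rw [hwdef]
              exact ⟨hx1, lt_trans hx2 haα⟩
            rw [hweq, hwdef] at hxw
            exact ⟨hxw.1, hx2⟩
          · rintro ⟨hx1, hx2⟩
            have hxw : x ∈ w β := by
              rw [hwdef]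
              exact ⟨hx1, lt_trans hx2 (lt_trans haα hαβ)⟩
            rw [← hweq, hwdef] at hxw
            exact ⟨hxw.1, hx2⟩
        exact ⟨by rw [hseteq], (hΦdata a h).1⟩
      · exact ⟨(hΨdata a h).2.2.2, (hΨdata a h).1⟩
    · intro ξ hξ
      have hsh := hshared ξ hξ.1 hξ.2
      have hξU : ξ ∈ U := hmemU α hαΛ ξ hξ.1
      apply (hEg ξ hξU).2.2
      refine ⟨hαβ, hβΛ, ⟨hαS, ?_⟩, ⟨hβS, ?_⟩, (hdata ξ hsh).2⟩
      · exact htail ξ hξU α (le_of_lt (hηsmall ξ hsh)) hαΛ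
      · exact htail ξ hξU β (le_of_lt (lt_trans (hηsmall ξ hsh) hαβ)) hβΛ

end Stmt2
end Part5
end
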